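/- arXiv:1812.07500 — 7 statements merged into one kernel-verified Lean document; each statement's English description precedes it below -/
import Mathlib

section
/- In the shift graph on k-tuples with k ≥ 2, every odd cycle has length at least 2k+1. -/
/-- `Shifts k a b` means `a_{i+1} = b_i` for all `i` with `i+1 < k`,
i.e. `b` is obtained from `a` by shifting down one place. -/
def Shifts {n k : ℕ} (a b : Fin k → Fin n) : Prop :=
  ∀ (i : ℕ) (h : i + 1 < k), a ⟨i + 1, h⟩ = b ⟨i, Nat.lt_of_succ_lt h⟩

/-- The shift graph on strictly increasing `k`-tuples with entries in `{1,…,n}`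
(here realized as `Fin n`): two tuples are adjacent if one is a shift of the other. -/
def shiftGraph (n k : ℕ) (hk : 2 ≤ k) : SimpleGraph {a : Fin k → Fin n // StrictMono a} where
  Adj x y := Shifts x.1 y.1 ∨ Shifts y.1 x.1
  symm := by constructor; rintro x y (h | h); exacts [Or.inr h, Or.inl h]
  loopless := by
    constructor
    rintro ⟨a, ha⟩ (h | h) <;>
    · have h1 : (0 : ℕ) + 1 < k := by omega
      have := h 0 h1
      have := ha (show (⟨0, by omega⟩ : Fin k) < ⟨1, h1⟩ by simp [Fin.lt_def])
      simp_all [Fin.ext_iff]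
      omega

section Aux
variable {n : ℕ}

lemma mod_succ_eq {j m : ℕ} (hm : 0 < m) :
    (j + 1) % m = if j % m + 1 = m then 0 else j % m + 1 := by
  have h1 : (j % m + 1) % m = (j + 1) % m := Nat.mod_add_mod j m 1
  by_cases h : j % m + 1 = m
  · rw [if_pos h, ← h1, h, Nat.mod_self]
  · rw [if_neg h, ← h1]
    exact Nat.mod_eq_of_lt (lt_of_le_of_ne (Nat.mod_lt j hm) h)

lemma shifts_succ {k : ℕ} {a b : Fin (k+1) → Fin n} (h : Shifts a b) :
    Shifts (fun i : Fin k => a i.succ) (fun i : Fin k => b i.succ) := by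
  intro i hi
  have h2 := h (i+1) (Nat.succ_lt_succ hi)
  simpa [Fin.succ_mk] using h2

lemma all_fwd {k ℓ : ℕ} (hk : 2 ≤ k) (hl : 0 < ℓ) (a : ℕ → Fin k → Fin n)
    (hmono : ∀ j, StrictMono (a j)) (hper : ∀ j, a (j + ℓ) = a j)
    (hP : ∀ j, Shifts (a j) (a (j+1))) : False := by
  have h0k : 0 < k := by omega
  have h01 : (0:ℕ) + 1 < k := by omega
  have hlt : (⟨0, h0k⟩ : Fin k) < ⟨1, h01⟩ := by simp [Fin.lt_def]
  have hc : StrictMono (fun j : ℕ => a j ⟨0, h0k⟩) := by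
    apply strictMono_nat_of_lt_succ
    intro j
    calc a j ⟨0, h0k⟩ < a j ⟨1, h01⟩ := hmono j hlt
      _ = a (j+1) ⟨0, h0k⟩ := hP j 0 h01
  have h2 : a 0 ⟨0, h0k⟩ < a ℓ ⟨0, h0k⟩ := hc hl
  have h3 : a ℓ = a 0 := by simpa using hper 0
  rw [h3] at h2
  exact lt_irrefl _ h2

lemma all_bwd {k ℓ : ℕ} (hk : 2 ≤ k) (hl : 0 < ℓ) (a : ℕ → Fin k → Fin n)
    (hmono : ∀ j, StrictMono (a j)) (hper : ∀ j, a (j + ℓ) = a j)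
    (hQ : ∀ j, Shifts (a (j+1)) (a j)) : False := by
  have h0k : 0 < k := by omega
  have h01 : (0:ℕ) + 1 < k := by omega
  have hlt : (⟨0, h0k⟩ : Fin k) < ⟨1, h01⟩ := by simp [Fin.lt_def]
  have hc : StrictAnti (fun j : ℕ => a j ⟨0, h0k⟩) := by
    apply strictAnti_nat_of_succ_lt
    intro j
    calc a (j+1) ⟨0, h0k⟩ < a (j+1) ⟨1, h01⟩ := hmono (j+1) hlt
      _ = a j ⟨0, h0k⟩ := hQ j 0 h01
  have h2 : a ℓ ⟨0, h0k⟩ < a 0 ⟨0, h0k⟩ := hc hl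
  have h3 : a ℓ = a 0 := by simpa using hper 0
  rw [h3] at h2
  exact lt_irrefl _ h2

lemma find_peak {P Q : ℕ → Prop} (h : ∀ j, P j ∨ Q j) {ℓ : ℕ} (hl : 0 < ℓ)
    (hQper : ∀ j, Q j → Q (j + ℓ))
    (hP : ∃ x, P x) (hQ : ∃ x, Q x) : ∃ j, P j ∧ Q (j+1) := by
  classical
  obtain ⟨a, ha⟩ := hP
  obtain ⟨b, hb⟩ := hQ
  have hb' : ∀ t, Q (b + ℓ * t) := by
    intro t
    induction t with
    | zero => simpa using hb
    | succ t ih =>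
      have h2 := hQper _ ih
      have e : b + ℓ * (t+1) = b + ℓ * t + ℓ := by ring
      rwa [e]
  have hmul : a + 1 ≤ ℓ * (a + 1) := by
    calc a + 1 = 1 * (a+1) := (one_mul _).symm
      _ ≤ ℓ * (a+1) := Nat.mul_le_mul_right _ hl
  have hex : ∃ m, a < m ∧ Q m := ⟨b + ℓ * (a+1), by omega, hb' (a+1)⟩
  obtain ⟨ham, hQm⟩ := Nat.find_spec hex
  set m := Nat.find hex with hm
  by_cases hma : m = a + 1
  · exact ⟨a, ha, by rw [← hma]; exact hQm⟩
  · have h3 : a < m - 1 := by omega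
    have h4 : ¬ (a < m - 1 ∧ Q (m-1)) := Nat.find_min hex (by omega)
    have h6 : P (m-1) := (h (m-1)).resolve_right (fun hq => h4 ⟨h3, hq⟩)
    refine ⟨m-1, h6, ?_⟩
    rw [Nat.sub_add_cancel (by omega)]
    exact hQm

lemma ell_one {k : ℕ} (hk : 2 ≤ k) (a : ℕ → Fin k → Fin n)
    (hmono : ∀ j, StrictMono (a j)) (hper : ∀ j, a (j + 1) = a j)
    (hadj : ∀ j, Shifts (a j) (a (j+1)) ∨ Shifts (a (j+1)) (a j)) : False := by
  have h0k : 0 < k := by omega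
  have h01 : (0:ℕ) + 1 < k := by omega
  have hlt : (⟨0, h0k⟩ : Fin k) < ⟨1, h01⟩ := by simp [Fin.lt_def]
  have e : a 1 = a 0 := by simpa using hper 0
  rcases hadj 0 with h | h
  · have h2 := h 0 h01
    rw [e] at h2
    exact absurd h2 (ne_of_gt (hmono 0 hlt))
  · have h2 := h 0 h01
    rw [e] at h2
    exact absurd h2 (ne_of_gt (hmono 0 hlt))

lemma key : ∀ k, 2 ≤ k → ∀ ℓ, Odd ℓ → ℓ < 2 * k →
    ∀ a : ℕ → Fin k → Fin n, (∀ j, StrictMono (a j)) → (∀ j, a (j + ℓ) = a j) →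
    (∀ j, Shifts (a j) (a (j+1)) ∨ Shifts (a (j+1)) (a j)) → False := by
  intro k hk
  induction k, hk using Nat.le_induction with
  | base =>
    intro ℓ hodd hℓ a hmono hper hadj
    have hℓ13 : ℓ = 1 ∨ ℓ = 3 := by
      obtain ⟨t, ht⟩ := hodd; omega
    rcases hℓ13 with rfl | rfl
    · exact ell_one (le_refl 2) a hmono hper hadj
    · by_cases hPall : ∀ j, Shifts (a j) (a (j+1))
      · exact all_fwd (le_refl 2) (by norm_num) a hmono hper hPall
      by_cases hQall : ∀ j, Shifts (a (j+1)) (a j)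
      · exact all_bwd (le_refl 2) (by norm_num) a hmono hper hQall
      push_neg at hPall hQall
      obtain ⟨p, hp⟩ := hPall
      obtain ⟨q, hq⟩ := hQall
      have hexP : ∃ x, Shifts (a x) (a (x+1)) := ⟨q, (hadj q).resolve_right hq⟩
      have hexQ : ∃ x, Shifts (a (x+1)) (a x) := ⟨p, (hadj p).resolve_left hp⟩
      have hQper : ∀ j, Shifts (a (j+1)) (a j) → Shifts (a (j + 3 + 1)) (a (j + 3)) := by
        intro j hj
        have e1 : a (j + 3) = a j := hper j
        have e2 : a (j + 3 + 1) = a (j + 1) := by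
          rw [show j + 3 + 1 = (j + 1) + 3 from by ring]
          exact hper (j+1)
        rw [e1, e2]
        exact hj
      obtain ⟨j0, hpk1, hpk2⟩ := find_peak hadj (by norm_num) hQper hexP hexQ
      have h01 : (0:ℕ) + 1 < 2 := by norm_num
      have hlt : (⟨0, by norm_num⟩ : Fin 2) < ⟨1, h01⟩ := by simp [Fin.lt_def]
      have e1 := hpk1 0 h01
      have e2 := hpk2 0 h01
      have e3 : a (j0+2) ⟨1, h01⟩ = a j0 ⟨1, h01⟩ := by rw [e2, ← e1]
      have e4 : a (j0 + 3) = a j0 := hper j0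
      rcases hadj (j0 + 2) with h | h
      · have h5 := h 0 h01
        rw [show j0 + 2 + 1 = j0 + 3 from rfl, e4, e3] at h5
        exact absurd h5 (ne_of_gt (hmono j0 hlt))
      · have h5 := h 0 h01
        rw [show j0 + 2 + 1 = j0 + 3 from rfl, e4] at h5
        have h6 : a (j0+2) ⟨0, by norm_num⟩ < a (j0+2) ⟨1, h01⟩ := hmono (j0+2) hlt
        rw [e3, ← h5] at h6
        exact lt_irrefl _ h6
  | succ k hk IH =>
    intro ℓ hodd hℓ a hmono hper hadj
    by_cases hPall : ∀ j, Shifts (a j) (a (j+1))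
    · exact all_fwd (by omega) hodd.pos a hmono hper hPall
    by_cases hQall : ∀ j, Shifts (a (j+1)) (a j)
    · exact all_bwd (by omega) hodd.pos a hmono hper hQall
    rcases Nat.lt_or_ge ℓ 3 with h3 | h3
    · have hℓ1 : ℓ = 1 := by obtain ⟨t, ht⟩ := hodd; omega
      subst hℓ1
      exact ell_one (by omega) a hmono hper hadj
    push_neg at hPall hQall
    obtain ⟨p, hp⟩ := hPall
    obtain ⟨q, hq⟩ := hQall
    have hexP : ∃ x, Shifts (a x) (a (x+1)) := ⟨q, (hadj q).resolve_right hq⟩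
    have hexQ : ∃ x, Shifts (a (x+1)) (a x) := ⟨p, (hadj p).resolve_left hp⟩
    have hQper : ∀ j, Shifts (a (j+1)) (a j) → Shifts (a (j + ℓ + 1)) (a (j + ℓ)) := by
      intro j hj
      have e1 : a (j + ℓ) = a j := hper j
      have e2 : a (j + ℓ + 1) = a (j + 1) := by
        rw [show j + ℓ + 1 = (j + 1) + ℓ from by ring]
        exact hper (j+1)
      rw [e1, e2]
      exact hj
    obtain ⟨j0, hpk1, hpk2⟩ := find_peak hadj hodd.pos hQper hexP hexQ
    obtain ⟨m, rfl⟩ : ∃ m, ℓ = m + 2 := ⟨ℓ - 2, by omega⟩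
    have hm0 : 0 < m := by omega
    -- rotated walk
    set u : ℕ → Fin (k+1) → Fin n := fun j => a (j0 + j) with hu
    have humono : ∀ j, StrictMono (u j) := fun j => hmono _
    have huper : ∀ j, u (j + (m+2)) = u j := by
      intro j
      show a (j0 + (j + (m+2))) = a (j0 + j)
      rw [show j0 + (j + (m+2)) = (j0 + j) + (m+2) from by ring]
      exact hper (j0 + j)
    have huadj : ∀ j, Shifts (u j) (u (j+1)) ∨ Shifts (u (j+1)) (u j) := by
      intro j
      have h2 := hadj (j0 + j)
      rwa [show j0 + j + 1 = j0 + (j+1) from by ring] at h2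
    have hS1 : Shifts (u 0) (u 1) := by
      show Shifts (a (j0 + 0)) (a (j0 + 1))
      rwa [add_zero]
    have hS2 : Shifts (u 2) (u 1) := hpk2
    have hpkeq : ∀ i : Fin k, u 0 i.succ = u 2 i.succ := by
      intro i
      have hi : (i : ℕ) + 1 < k + 1 := Nat.succ_lt_succ i.isLt
      have e1 := hS1 i hi
      have e2 := hS2 i hi
      have hs : i.succ = (⟨(i : ℕ) + 1, hi⟩ : Fin (k+1)) := by
        ext; simp
      rw [hs, e1, e2]
    have hfe : (fun i : Fin k => u 0 i.succ) = (fun i : Fin k => u 2 i.succ) :=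
      funext hpkeq
    refine IH m ?_ ?_ (fun j i => u (j % m + 2) i.succ) ?_ ?_ ?_
    · obtain ⟨t, ht⟩ := hodd
      exact ⟨t - 1, by omega⟩
    · omega
    · intro j
      intro i i' hii
      exact humono _ (Fin.succ_lt_succ_iff.mpr hii)
    · intro j
      simp only [Nat.add_mod_right]
    · intro j
      have hr : j % m < m := Nat.mod_lt _ hm0
      by_cases hb : j % m + 1 = m
      · have h1 : (j+1) % m = 0 := by rw [mod_succ_eq hm0, if_pos hb]
        have e1 : j % m + 2 = m + 1 := by omega
        have e2 : u (m + 1 + 1) = u 0 := by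
          have := huper 0
          rwa [zero_add, show m + 1 + 1 = m + 2 from rfl] at this
        have hedge := huadj (m + 1)
        rw [e2] at hedge
        simp only [h1, e1, Nat.zero_add]
        rcases hedge with h | h
        · left
          have h5 := shifts_succ h
          rwa [hfe] at h5
        · right
          have h5 := shifts_succ h
          rwa [hfe] at h5
      · have h1 : (j+1) % m = j % m + 1 := by rw [mod_succ_eq hm0, if_neg hb]
        simp only [h1]
        have hedge := huadj (j % m + 2)
        rw [show j % m + 2 + 1 = j % m + 1 + 2 from by ring] at hedge
        rcases hedge with h | h
        · exact Or.inl (shifts_succ h)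
        · exact Or.inr (shifts_succ h)

end Aux

/-- In the shift graph on `k`-tuples with `k ≥ 2`, every odd cycle has length
at least `2k+1`. -/
theorem shiftGraph_odd_cycle_long (n k : ℕ) (hk : 2 ≤ k) (hn : 2 * k < n)
    (v : {a : Fin k → Fin n // StrictMono a})
    (c : (shiftGraph n k hk).Walk v v) (hc : c.IsCycle) (hodd : Odd c.length) :
    2 * k + 1 ≤ c.length := by
  by_contra hcon
  push_neg at hcon
  have hℓ : c.length < 2 * k := by
    obtain ⟨t, ht⟩ := hodd; omega
  have hpos : 0 < c.length := hodd.pos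
  set ℓ := c.length with hℓdef
  refine key k hk ℓ hodd hℓ (fun j => (c.getVert (j % ℓ)).1)
    (fun j => (c.getVert (j % ℓ)).2) ?_ ?_
  · intro j
    simp only [Nat.add_mod_right]
  · intro j
    have hr : j % ℓ < ℓ := Nat.mod_lt _ hpos
    by_cases hb : j % ℓ + 1 = ℓ
    · have h1 : (j+1) % ℓ = 0 := by rw [mod_succ_eq hpos, if_pos hb]
      have hAdj := c.adj_getVert_succ hr
      rw [hb] at hAdj
      have e : c.getVert ℓ = c.getVert 0 := by
        rw [SimpleGraph.Walk.getVert_length, SimpleGraph.Walk.getVert_zero]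
      rw [e] at hAdj
      simp only [h1]
      exact hAdj
    · have h1 : (j+1) % ℓ = j % ℓ + 1 := by rw [mod_succ_eq hpos, if_neg hb]
      simp only [h1]
      exact c.adj_getVert_succ hr
end

section
/- Every odd cycle in the Kneser graph K(n,k) has length at least n/(n−2k). -/
/-- The Kneser graph `K(n,k)`: vertices are the `k`-element subsets of `{1,…,n}`,
two of them being adjacent iff they are disjoint (and distinct). -/
def kneserGraph (n k : ℕ) : SimpleGraph {s : Finset (Fin n) // s.card = k} where
  Adj x y := x ≠ y ∧ Disjoint x.1 y.1
  symm := ⟨by rintro x y ⟨h1, h2⟩; exact ⟨h1.symm, h2.symm⟩⟩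
  loopless := ⟨by rintro x ⟨h1, _⟩; exact h1 rfl⟩

lemma kneser_step (n k : ℕ) (h2k : 2 * k < n) (A C D B : Finset (Fin n))
    (hC : C.card = k) (hD : D.card = k) (hB : B.card = k)
    (hCD : Disjoint C D) (hDB : Disjoint D B) :
    (A ∩ C).card ≤ (A ∩ B).card + (n - 2 * k) := by
  have h1 : (C \ B).card + (C ∩ B).card = k := by
    rw [Finset.card_sdiff_add_card_inter, hC]
  have h3 : (C ∪ B).card + (C ∩ B).card = 2 * k := by
    rw [Finset.card_union_add_card_inter, hC, hB]; ring
  have h2 : (C ∪ B).card ≤ n - k := by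
    have hsub : C ∪ B ⊆ Dᶜ := by
      apply Finset.union_subset
      · exact fun x hx => Finset.mem_compl.mpr fun hxD => Finset.disjoint_left.mp hCD hx hxD
      · exact fun x hx => Finset.mem_compl.mpr fun hxD => Finset.disjoint_left.mp hDB.symm hx hxD
    have := Finset.card_le_card hsub
    rwa [Finset.card_compl, Fintype.card_fin, hD] at this
  have h4 : (A ∩ C).card ≤ (A ∩ B).card + (C \ B).card := by
    have hsub : A ∩ C ⊆ (A ∩ B) ∪ (C \ B) := by
      intro x hx
      simp only [Finset.mem_inter, Finset.mem_union, Finset.mem_sdiff] at *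
      tauto
    calc (A ∩ C).card ≤ ((A ∩ B) ∪ (C \ B)).card := Finset.card_le_card hsub
      _ ≤ (A ∩ B).card + (C \ B).card := Finset.card_union_le _ _
  omega

lemma kneser_walk (n k : ℕ) (h2k : 2 * k < n)
    {v w : {s : Finset (Fin n) // s.card = k}}
    (c : (kneserGraph n k).Walk v w) :
    ∀ j, 2 * j ≤ c.length →
      k ≤ (v.1 ∩ (c.getVert (2 * j)).1).card + j * (n - 2 * k) := by
  intro j
  induction j with
  | zero =>
    intro _
    simp [SimpleGraph.Walk.getVert_zero, Finset.inter_self, v.2]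
  | succ j ih =>
    intro hj
    have hj' : 2 * j ≤ c.length := by omega
    have h1 : 2 * j < c.length := by omega
    have h2 : 2 * j + 1 < c.length := by omega
    have a1 := c.adj_getVert_succ h1
    have a2 := c.adj_getVert_succ h2
    obtain ⟨-, d1⟩ := a1
    obtain ⟨-, d2⟩ := a2
    have key := kneser_step n k h2k v.1 (c.getVert (2 * j)).1
      (c.getVert (2 * j + 1)).1 (c.getVert (2 * j + 1 + 1)).1
      (c.getVert (2 * j)).2 (c.getVert (2 * j + 1)).2 (c.getVert (2 * j + 1 + 1)).2
      d1 d2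
    have hidx : 2 * (j + 1) = 2 * j + 1 + 1 := by omega
    rw [hidx]
    have hm : (j + 1) * (n - 2 * k) = j * (n - 2 * k) + (n - 2 * k) := by ring
    rw [hm]
    have := ih hj'
    omega

/-- Every odd cycle in the Kneser graph `K(n,k)` has length at least `n/(n−2k)`,
i.e. its length multiplied by `n − 2k` is at least `n`. -/
theorem kneserGraph_odd_cycle_long (n k : ℕ) (h2k : 2 * k < n) (hk : 0 < k)
    (v : {s : Finset (Fin n) // s.card = k})
    (c : (kneserGraph n k).Walk v v) (hc : c.IsCycle) (hodd : Odd c.length) :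
    n ≤ c.length * (n - 2 * k) := by
  obtain ⟨t, ht⟩ := hodd
  have hkey := kneser_walk n k h2k c t (by omega)
  have hlast : 2 * t < c.length := by omega
  have alast := c.adj_getVert_succ hlast
  obtain ⟨-, dlast⟩ := alast
  have hend : c.getVert (2 * t + 1) = v := by
    have : 2 * t + 1 = c.length := by omega
    rw [this, SimpleGraph.Walk.getVert_length]
  rw [hend] at dlast
  have hinter : (v.1 ∩ (c.getVert (2 * t)).1).card = 0 := by
    rw [Finset.card_eq_zero, ← Finset.disjoint_iff_inter_eq_empty]
    exact dlast.symm
  rw [hinter] at hkey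
  simp only [zero_add] at hkey
  have hlen : c.length * (n - 2 * k) = 2 * (t * (n - 2 * k)) + (n - 2 * k) := by
    rw [ht]; ring
  omega
end

section
/- Each graph G_k in Mycielski's construction is triangle-free and has chromatic number exactly k. -/
/-- The adjacency relation of the Mycielskian of `G`: on vertex set `V ⊕ V ⊕ Unit`,
where `Sum.inl i` are the original vertices `aᵢ`, `Sum.inr (Sum.inl i)` are the
shadow vertices `bᵢ` and `Sum.inr (Sum.inr ())` is the apex `c`. -/
def mycAdj {V : Type*} (G : SimpleGraph V) : (V ⊕ V ⊕ Unit) → (V ⊕ V ⊕ Unit) → Prop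
  | Sum.inl i, Sum.inl j => G.Adj i j
  | Sum.inl i, Sum.inr (Sum.inl j) => G.Adj i j
  | Sum.inr (Sum.inl i), Sum.inl j => G.Adj i j
  | Sum.inr (Sum.inl _), Sum.inr (Sum.inr _) => True
  | Sum.inr (Sum.inr _), Sum.inr (Sum.inl _) => True
  | _, _ => False

/-- The Mycielskian of a graph. -/
def mycielskian {V : Type*} (G : SimpleGraph V) : SimpleGraph (V ⊕ V ⊕ Unit) where
  Adj := mycAdj G
  symm := by
    constructor
    rintro (i | i | i) (j | j | j) h <;> simp only [mycAdj] at h ⊢ <;>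
      first | exact h.symm | exact h | trivial
  loopless := by constructor; rintro (i | i | i) h <;> simp only [mycAdj] at h <;> exact G.loopless.irrefl i h

/-- The vertex types of the iterated Mycielski construction, starting from `K₂`. -/
def mycVert : ℕ → Type
  | 0 => Fin 2
  | j + 1 => mycVert j ⊕ mycVert j ⊕ Unit

/-- The iterated Mycielski graphs: `mycGraph 0 = K₂ (= G₂)` and
`mycGraph (j+1)` is the Mycielskian of `mycGraph j` (so `mycGraph j = G_{j+2}`). -/
def mycGraph : (j : ℕ) → SimpleGraph (mycVert j)
  | 0 => ⊤
  | j + 1 => mycielskian (mycGraph j)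

instance mycVertFintype : ∀ j, Fintype (mycVert j)
  | 0 => inferInstanceAs (Fintype (Fin 2))
  | j + 1 =>
    letI := mycVertFintype j
    inferInstanceAs (Fintype (mycVert j ⊕ mycVert j ⊕ Unit))

lemma mycielskian_adj {V : Type*} (G : SimpleGraph V) (x y) :
    (mycielskian G).Adj x y ↔ mycAdj G x y := Iff.rfl

lemma noTri {V : Type*} {G : SimpleGraph V} (hG : G.CliqueFree 3) {a b c : V}
    (hab : G.Adj a b) (hac : G.Adj a c) (hbc : G.Adj b c) : False := by
  classical
  exact hG _ (SimpleGraph.is3Clique_iff.2 ⟨a, b, c, hab, hac, hbc, rfl⟩)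

lemma myc_cliqueFree {V : Type*} {G : SimpleGraph V} (hG : G.CliqueFree 3) :
    (mycielskian G).CliqueFree 3 := by
  classical
  intro s hs
  rw [SimpleGraph.is3Clique_iff] at hs
  obtain ⟨a, b, c, hab, hac, hbc, -⟩ := hs
  rcases a with i | i | i <;> rcases b with j | j | j <;> rcases c with k | k | k <;>
    simp only [mycielskian_adj, mycAdj] at hab hac hbc <;>
    first | exact hab | exact hac | exact hbc | exact noTri hG hab hac hbc

lemma myc_colorable {V : Type*} {G : SimpleGraph V} {n : ℕ} (h : G.Colorable n) :
    (mycielskian G).Colorable (n + 1) := by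
  obtain ⟨f⟩ := h
  refine ⟨SimpleGraph.Coloring.mk
    (fun x => match x with
      | Sum.inl v => (f v).castSucc
      | Sum.inr (Sum.inl v) => (f v).castSucc
      | Sum.inr (Sum.inr _) => Fin.last n) ?_⟩
  rintro (i | i | i) (j | j | j) hadj <;>
    simp only [mycielskian_adj, mycAdj] at hadj <;>
    first
      | exact hadj.elim
      | exact fun he => f.valid hadj (Fin.castSucc_injective _ he)
      | exact (Fin.castSucc_lt_last _).ne
      | exact (Fin.castSucc_lt_last _).ne'

lemma colorable_of_myc {V : Type*} {G : SimpleGraph V} {n : ℕ}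
    (h : (mycielskian G).Colorable (n + 1)) : G.Colorable n := by
  classical
  obtain ⟨f⟩ := h
  set c0 : Fin (n + 1) := f (Sum.inr (Sum.inr ())) with hc0
  have hb : ∀ v : V, f (Sum.inr (Sum.inl v)) ≠ c0 := fun v =>
    f.valid (show (mycielskian G).Adj _ _ from trivial)
  let g : V → {x : Fin (n + 1) // x ≠ c0} := fun v =>
    if hv : f (Sum.inl v) = c0 then ⟨f (Sum.inr (Sum.inl v)), hb v⟩ else ⟨f (Sum.inl v), hv⟩
  have hcol : G.Coloring {x : Fin (n + 1) // x ≠ c0} := by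
    refine SimpleGraph.Coloring.mk g ?_
    intro v w hvw heq
    have hav : (mycielskian G).Adj (Sum.inl v) (Sum.inl w) := hvw
    have hbv : (mycielskian G).Adj (Sum.inr (Sum.inl v)) (Sum.inl w) := hvw
    have hbw : (mycielskian G).Adj (Sum.inl v) (Sum.inr (Sum.inl w)) := hvw
    simp only [g] at heq
    by_cases h1 : f (Sum.inl v) = c0 <;> by_cases h2 : f (Sum.inl w) = c0 <;>
      simp only [h1, h2, dif_pos, dif_neg, not_false_iff] at heq
    · exact f.valid hav (h1.trans h2.symm)
    · exact f.valid hbv (Subtype.ext_iff.1 heq)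
    · exact f.valid hbw (Subtype.ext_iff.1 heq)
    · exact f.valid hav (Subtype.ext_iff.1 heq)
  have hcard : Fintype.card {x : Fin (n + 1) // x ≠ c0} = n := by
    simp [Fintype.card_subtype_compl]
  exact hcard ▸ hcol.colorable

lemma mycGraph_aux (j : ℕ) : (mycGraph j).CliqueFree 3 ∧
    (mycGraph j).Colorable (j + 2) ∧ ¬ (mycGraph j).Colorable (j + 1) := by
  induction j with
  | zero =>
    refine ⟨SimpleGraph.cliqueFree_of_card_lt (by show Fintype.card (Fin 2) < 3; norm_num), ?_, ?_⟩
    · have := (SimpleGraph.selfColoring (mycGraph 0)).colorable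
      rwa [show Fintype.card (mycVert 0) = 2 from Fintype.card_fin 2] at this
    · rintro ⟨f⟩
      have hadj : (mycGraph 0).Adj (0 : Fin 2) (1 : Fin 2) := by
        show (⊤ : SimpleGraph (Fin 2)).Adj 0 1
        simp
      exact f.valid hadj (Subsingleton.elim (α := Fin 1) _ _)
  | succ j ih =>
    exact ⟨myc_cliqueFree ih.1, myc_colorable ih.2.1, fun h => ih.2.2 (colorable_of_myc h)⟩

/-- Each graph `G_k` (`k ≥ 2`) in Mycielski's construction is triangle-free and has
chromatic number exactly `k`. -/
theorem mycGraph_triangleFree_chromatic (j : ℕ) :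
    (mycGraph j).CliqueFree 3 ∧ (mycGraph j).chromaticNumber = (j + 2 : ℕ) := by
  obtain ⟨hfree, hcol, hncol⟩ := mycGraph_aux j
  refine ⟨hfree, le_antisymm (hcol.chromaticNumber_le) ?_⟩
  have h1 : ¬ (mycGraph j).chromaticNumber ≤ (j + 1 : ℕ) := fun h =>
    hncol (SimpleGraph.chromaticNumber_le_iff_colorable.1 h)
  have h2 : ((j + 1 : ℕ) : ℕ∞) < (mycGraph j).chromaticNumber := lt_of_not_ge h1
  calc ((j + 2 : ℕ) : ℕ∞) = ((j + 1 : ℕ) : ℕ∞) + 1 := by push_cast; ring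
    _ ≤ (mycGraph j).chromaticNumber := Order.add_one_le_of_lt h2
end

section
/- A forest H is χ-bounding if and only if every component of H is χ-bounding. -/
/-- A graph `H` is χ-bounding if the class of graphs with no induced subgraph isomorphic
to `H` is χ-bounded: there is a function `f` with `χ(G) ≤ f(ω(G))` for every finite
`H`-free graph `G`. -/
def ChiBounding {W : Type} (H : SimpleGraph W) : Prop :=
  ∃ f : ℕ → ℕ, ∀ (V : Type) [Fintype V] (G : SimpleGraph V),
    ¬ Nonempty (H ↪g G) → G.chromaticNumber ≤ (f G.cliqueNum : ℕ∞)

open SimpleGraph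



lemma colorable_induce_union {V : Type*} (G : SimpleGraph V) (s t : Set V) {m n : ℕ}
    (hs : (G.induce s).Colorable m) (ht : (G.induce t).Colorable n) :
    (G.induce (s ∪ t)).Colorable (m + n) := by
  classical
  obtain ⟨c1⟩ := hs; obtain ⟨c2⟩ := ht
  refine ⟨SimpleGraph.Coloring.mk
    (fun v => if hv : v.val ∈ s then Fin.castAdd n (c1 ⟨v.val, hv⟩)
      else Fin.natAdd m (c2 ⟨v.val, v.property.resolve_left hv⟩)) ?_⟩
  intro v w hadj heq
  have hG : G.Adj v.val w.val := hadj
  by_cases hv : v.val ∈ s <;> by_cases hw : w.val ∈ s <;>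
    simp only [hv, hw, dif_pos, dif_neg, not_false_iff, Fin.ext_iff,
      Fin.coe_castAdd, Fin.coe_natAdd] at heq
  · exact c1.valid (show (G.induce s).Adj ⟨v.val, hv⟩ ⟨w.val, hw⟩ from hG)
      (Fin.val_injective heq)
  · have := (c1 ⟨v.val, hv⟩).isLt; omega
  · have := (c1 ⟨w.val, hw⟩).isLt; omega
  · exact c2.valid (show (G.induce t).Adj ⟨v.val, _⟩ ⟨w.val, _⟩ from hG)
      (Fin.val_injective (by omega))

lemma colorable_induce_mono {V : Type*} (G : SimpleGraph V) {s t : Set V} (h : s ⊆ t) {n : ℕ}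
    (ht : (G.induce t).Colorable n) : (G.induce s).Colorable n :=
  ht.of_hom (SimpleGraph.induceHomOfLE G h).toHom

lemma free_induce {V W : Type*} {H : SimpleGraph W} {G : SimpleGraph V}
    (h : ¬ Nonempty (H ↪g G)) (s : Set V) : ¬ Nonempty (H ↪g G.induce s) :=
  fun ⟨e⟩ => h ⟨(SimpleGraph.Embedding.induce s).comp e⟩

lemma cliqueNum_le_of_embedding {V V' : Type*} [Fintype V] [Fintype V']
    {G : SimpleGraph V} {G' : SimpleGraph V'} (f : G ↪g G') : G.cliqueNum ≤ G'.cliqueNum := by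
  classical
  obtain ⟨s, hs⟩ := G.exists_isNClique_cliqueNum
  have hc : G'.IsClique (s.image f) := by
    intro x hx y hy hxy
    simp only [Finset.coe_image, Set.mem_image, Finset.mem_coe] at hx hy
    obtain ⟨a, ha, rfl⟩ := hx; obtain ⟨b, hb, rfl⟩ := hy
    exact f.map_rel_iff.mpr (hs.isClique ha hb (fun h => hxy (by rw [h])))
  have hcard : (s.image f).card = G.cliqueNum := by
    rw [Finset.card_image_of_injective _ f.injective, hs.card_eq]
  calc G.cliqueNum = (s.image f).card := hcard.symm
    _ ≤ G'.cliqueNum := SimpleGraph.IsClique.card_le_cliqueNum (tc := hc)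


lemma cliqueNum_nbhd_lt {V : Type*} [Fintype V] (G : SimpleGraph V) (a : V) {k : ℕ}
    (h : G.cliqueNum ≤ k + 1) : (G.induce {v | G.Adj a v}).cliqueNum ≤ k := by
  classical
  obtain ⟨s, hs⟩ := (G.induce {v | G.Adj a v}).exists_isNClique_cliqueNum
  set t : Finset V := insert a (s.image Subtype.val) with ht
  have hanotmem : a ∉ s.image Subtype.val := by
    simp only [Finset.mem_image]
    rintro ⟨⟨b, hb⟩, _, hba⟩
    exact G.irrefl (show G.Adj a a from hba ▸ hb)
  have hclique : G.IsClique t := by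
    intro x hx y hy hxy
    simp only [ht, Finset.coe_insert, Set.mem_insert_iff, Finset.coe_image,
      Set.mem_image, Finset.mem_coe] at hx hy
    rcases hx with rfl | ⟨⟨x', hx'⟩, hxs, rfl⟩
    · rcases hy with rfl | ⟨⟨y', hy'⟩, hys, rfl⟩
      · exact absurd rfl hxy
      · exact hy'
    · rcases hy with rfl | ⟨⟨y', hy'⟩, hys, rfl⟩
      · exact hx'.symm
      · exact hs.isClique hxs hys (fun hh => hxy (by rw [hh]))
  have hcard : t.card = (G.induce {v | G.Adj a v}).cliqueNum + 1 := by
    rw [ht, Finset.card_insert_of_notMem hanotmem,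
      Finset.card_image_of_injective _ Subtype.val_injective, hs.card_eq]
  have := SimpleGraph.IsClique.card_le_cliqueNum (tc := hclique)
  omega

lemma reachable_induce_of_walk {V : Type*} {G : SimpleGraph V} {s : Set V} :
    ∀ {a b : V} (p : G.Walk a b) (hp : ∀ u ∈ p.support, u ∈ s),
    (G.induce s).Reachable ⟨a, hp a p.start_mem_support⟩ ⟨b, hp b p.end_mem_support⟩ := by
  intro a b p
  induction p with
  | nil => intro hp; rfl
  | @cons a x b h q ih =>
    intro hp
    have hx : ∀ u ∈ q.support, u ∈ s := fun u hu => hp u (by simp [hu])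
    have h1 : (G.induce s).Adj ⟨a, hp a (SimpleGraph.Walk.start_mem_support _)⟩
        ⟨x, hx x q.start_mem_support⟩ := h
    exact h1.reachable.trans (ih hx)

/-- induce of induce is induce of the image. -/
def induceInduceIso {V : Type*} (G : SimpleGraph V) (s : Set V) (t : Set s) :
    (G.induce s).induce t ≃g G.induce (Subtype.val '' t) where
  toFun a := ⟨a.1.1, ⟨a.1, a.2, rfl⟩⟩
  invFun b := ⟨⟨b.1, by obtain ⟨a, _, h⟩ := b.2; exact h ▸ a.2⟩, by
    obtain ⟨a, ha, h⟩ := b.2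
    have : a = ⟨b.1, h ▸ a.2⟩ := Subtype.ext h
    exact this ▸ ha⟩
  left_inv a := rfl
  right_inv b := rfl
  map_rel_iff' := Iff.rfl


lemma chiBounding_anti {W W' : Type} {H : SimpleGraph W} {T : SimpleGraph W'}
    (j : T ↪g H) (h : ChiBounding H) : ChiBounding T := by
  obtain ⟨f, hf⟩ := h
  exact ⟨f, fun V _ G hfree => hf V G (fun ⟨e⟩ => hfree ⟨e.comp j⟩)⟩

lemma chiBounding_of_isEmpty {W : Type} [IsEmpty W] (H : SimpleGraph W) : ChiBounding H := by
  refine ⟨fun _ => 0, fun V _ G hfree => ?_⟩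
  exact absurd ⟨⟨Function.Embedding.ofIsEmpty, fun {a} => isEmptyElim a⟩⟩ hfree

def induceIsoOfEq {V : Type*} (G : SimpleGraph V) {s t : Set V} (h : s = t) :
    G.induce s ≃g G.induce t := ⟨Equiv.setCongr h, Iff.rfl⟩

/-- components of the complement of a component are components of the original graph -/
lemma comp_compl_iso {W : Type} {H : SimpleGraph W} (c : H.ConnectedComponent)
    (c' : (H.induce c.suppᶜ).ConnectedComponent) :
    ∃ d : H.ConnectedComponent,
      Nonempty ((H.induce c.suppᶜ).induce c'.supp ≃g H.induce d.supp) := by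
  classical
  obtain ⟨y0, hy0⟩ := c'.exists_rep
  refine ⟨H.connectedComponentMk y0.val, ?_⟩
  have hsupp : Subtype.val '' c'.supp = (H.connectedComponentMk y0.val).supp := by
    ext x
    constructor
    · rintro ⟨y, hy, rfl⟩
      rw [ConnectedComponent.mem_supp_iff] at hy ⊢
      rw [← hy0] at hy
      have hr : (H.induce c.suppᶜ).Reachable y y0 := ConnectedComponent.eq.mp hy
      have : H.Reachable y.val y0.val := hr.map (SimpleGraph.Embedding.induce c.suppᶜ).toHom
      exact ConnectedComponent.sound this
    · intro hx
      rw [ConnectedComponent.mem_supp_iff] at hx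
      have hr : H.Reachable x y0.val := ConnectedComponent.eq.mp hx
      obtain ⟨p⟩ := hr
      have hmem : ∀ u ∈ p.support, u ∈ c.suppᶜ := by
        intro u hu
        have h1 : H.Reachable x u := (p.takeUntil u hu).reachable
        have h2 : H.connectedComponentMk u = H.connectedComponentMk y0.val := by
          rw [← ConnectedComponent.sound h1, hx]
        intro huS
        rw [ConnectedComponent.mem_supp_iff] at huS
        exact y0.2 (ConnectedComponent.mem_supp_iff _ _ |>.mpr (h2.symm.trans huS))
      have hreach := reachable_induce_of_walk (s := c.suppᶜ) p hmem
      have hy0' : (⟨y0.val, hmem _ p.end_mem_support⟩ : ↥(c.suppᶜ)) = y0 := Subtype.ext rfl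
      rw [hy0'] at hreach
      refine ⟨⟨x, hmem x p.start_mem_support⟩, ?_, rfl⟩
      rw [ConnectedComponent.mem_supp_iff, ← hy0]
      exact ConnectedComponent.sound hreach
  exact ⟨(induceInduceIso H c.suppᶜ c'.supp).trans (induceIsoOfEq H hsupp)⟩


lemma glue_embedding {W V : Type} {H : SimpleGraph W} {G : SimpleGraph V}
    (c : H.ConnectedComponent) {N : Set V} (φ : (H.induce c.supp) ↪g G)
    (hφN : ∀ a : ↥c.supp, (φ a : V) ∈ N)
    (hadjN : ∀ (a : ↥c.supp) (v : V), G.Adj (φ a) v → v ∈ N)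
    (ψ : (H.induce c.suppᶜ) ↪g G.induce Nᶜ) : Nonempty (H ↪g G) := by
  classical
  have hcomp : ∀ x y : W, x ∈ c.supp → y ∉ c.supp → ¬ H.Adj x y := by
    intro x y hx hy hadj
    rw [ConnectedComponent.mem_supp_iff] at hx hy
    exact hy ((ConnectedComponent.sound hadj.reachable).symm.trans hx)
  let f : W → V := fun x => if hx : x ∈ c.supp then φ ⟨x, hx⟩ else (ψ ⟨x, hx⟩).val
  have hmem : ∀ x (hx : x ∈ c.supp), f x = φ ⟨x, hx⟩ := fun x hx => dif_pos hx
  have hnot : ∀ x (hx : x ∉ c.supp), f x = (ψ ⟨x, hx⟩).val := fun x hx => dif_neg hx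
  have hinj : Function.Injective f := by
    intro x y hxy
    by_cases hx : x ∈ c.supp <;> by_cases hy : y ∈ c.supp
    · rw [hmem x hx, hmem y hy] at hxy
      exact congrArg Subtype.val (φ.injective hxy)
    · rw [hmem x hx, hnot y hy] at hxy
      exact absurd (hxy ▸ hφN ⟨x, hx⟩) (ψ ⟨y, hy⟩).2
    · rw [hnot x hx, hmem y hy] at hxy
      exact absurd (hxy ▸ hφN ⟨y, hy⟩) (ψ ⟨x, hx⟩).2
    · rw [hnot x hx, hnot y hy] at hxy
      exact congrArg Subtype.val (ψ.injective (Subtype.val_injective hxy))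
  have key : ∀ x y (hx : x ∈ c.supp) (hy : y ∉ c.supp),
      ¬ G.Adj (f x) (f y) ∧ ¬ H.Adj x y := by
    intro x y hx hy
    refine ⟨?_, hcomp x y hx hy⟩
    rw [hmem x hx, hnot y hy]
    intro hGadj
    exact (ψ ⟨y, hy⟩).2 (hadjN ⟨x, hx⟩ _ hGadj)
  have hadj : ∀ x y, G.Adj (f x) (f y) ↔ H.Adj x y := by
    intro x y
    by_cases hx : x ∈ c.supp <;> by_cases hy : y ∈ c.supp
    · rw [hmem x hx, hmem y hy]
      exact φ.map_rel_iff
    · obtain ⟨h1, h2⟩ := key x y hx hy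
      exact iff_of_false h1 h2
    · obtain ⟨h1, h2⟩ := key y x hy hx
      exact iff_of_false (fun h => h1 h.symm) (fun h => h2 h.symm)
    · rw [hnot x hx, hnot y hy]
      exact ψ.map_rel_iff
  exact ⟨⟨⟨f, hinj⟩, fun {x y} => hadj x y⟩⟩


lemma colorable_induce_singleton {V : Type*} (G : SimpleGraph V) (a : V) :
    (G.induce {a}).Colorable 1 := by
  refine ⟨SimpleGraph.Coloring.mk (fun _ => 0) ?_⟩
  intro v w hadj
  have hG : G.Adj v.val w.val := hadj
  have hv : v.val = a := v.2
  have hw : w.val = a := w.2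
  rw [hv, hw] at hG
  exact absurd hG (G.irrefl)

lemma colorable_induce_biUnion {V ι : Type*} [DecidableEq ι] (G : SimpleGraph V)
    (Na : ι → Set V) {m : ℕ} (t : Finset ι)
    (hall : ∀ a ∈ t, (G.induce (Na a)).Colorable m) :
    (G.induce (⋃ a ∈ t, Na a)).Colorable (t.card * m) := by
  induction t using Finset.induction_on with
  | empty =>
    have h : (⋃ a ∈ (∅ : Finset ι), Na a) = ∅ := by simp
    rw [h]
    haveI : IsEmpty ↥(∅ : Set V) := ⟨fun x => x.2⟩
    exact SimpleGraph.Colorable.of_isEmpty (G := G.induce ∅) _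
  | @insert a s ha ih =>
    have h : (⋃ b ∈ insert a s, Na b) = Na a ∪ ⋃ b ∈ s, Na b := by
      simp [Set.biUnion_insert]
    rw [h]
    have hc := colorable_induce_union G _ _ (hall a (Finset.mem_insert_self a s))
      (ih (fun b hb => hall b (Finset.mem_insert_of_mem hb)))
    refine hc.mono ?_
    rw [Finset.card_insert_of_notMem ha]
    exact Nat.le_of_eq (by ring)

lemma union_step {W : Type} [Fintype W] (H : SimpleGraph W) (c : H.ConnectedComponent)
    (h1 : ChiBounding (H.induce c.supp)) (h2 : ChiBounding (H.induce c.suppᶜ)) :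
    ChiBounding H := by
  classical
  obtain ⟨f1, hf1⟩ := h1
  obtain ⟨f2, hf2⟩ := h2
  let g1 : ℕ → ℕ := fun k => (Finset.range (k+1)).sup f1
  let g2 : ℕ → ℕ := fun k => (Finset.range (k+1)).sup f2
  let F : ℕ → ℕ := fun k =>
    Nat.rec 0 (fun k Fk => g1 (k+1) + g2 (k+1) + Fintype.card W * (Fk + 1)) k
  have hg1 : ∀ {j k : ℕ}, j ≤ k → f1 j ≤ g1 k := fun {j k} h =>
    Finset.le_sup (Finset.mem_range.mpr (by omega))
  have hg2 : ∀ {j k : ℕ}, j ≤ k → f2 j ≤ g2 k := fun {j k} h =>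
    Finset.le_sup (Finset.mem_range.mpr (by omega))
  have key : ∀ (k : ℕ) (V : Type) [Fintype V] (G : SimpleGraph V), ¬ Nonempty (H ↪g G) →
      G.cliqueNum ≤ k → G.Colorable (F k) := by
    intro k
    induction k with
    | zero =>
      intro V _ G hfree hk
      cases isEmpty_or_nonempty V with
      | inl h => exact SimpleGraph.Colorable.of_isEmpty (G := G) _
      | inr h =>
        obtain ⟨v⟩ := h
        have hcl : G.IsClique (↑({v} : Finset V)) := by simp [SimpleGraph.IsClique]
        have hle := SimpleGraph.IsClique.card_le_cliqueNum (tc := hcl)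
        simp at hle
        omega
    | succ k ih =>
      intro V _ G hfree hk
      by_cases hT : Nonempty ((H.induce c.supp) ↪g G)
      case neg =>
        have hb := hf1 V G hT
        rw [chromaticNumber_le_iff_colorable] at hb
        refine hb.mono ?_
        have h1 : f1 G.cliqueNum ≤ g1 (k+1) := hg1 hk
        show f1 G.cliqueNum ≤ g1 (k+1) + g2 (k+1) + Fintype.card W * (F k + 1)
        omega
      case pos =>
        obtain ⟨φ⟩ := hT
        set tA : Finset V := Finset.univ.image (fun a : ↥c.supp => φ a) with htA
        set Nb : V → Set V := fun a => {v | v = a ∨ G.Adj a v} with hNb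
        set N : Set V := ⋃ a ∈ tA, Nb a with hN
        have htAmem : ∀ a : ↥c.supp, φ a ∈ tA := fun a =>
          Finset.mem_image.mpr ⟨a, Finset.mem_univ a, rfl⟩
        have hNa_col : ∀ a ∈ tA, (G.induce (Nb a)).Colorable (F k + 1) := by
          intro a _
          have hckn : (G.induce {v | G.Adj a v}).cliqueNum ≤ k := cliqueNum_nbhd_lt G a hk
          have hcol := ih ↥{v | G.Adj a v} (G.induce _) (free_induce hfree _) hckn
          have hset : Nb a = {v | G.Adj a v} ∪ {a} := by
            ext v
            simp only [hNb, Set.mem_setOf_eq, Set.mem_union, Set.mem_singleton_iff]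
            tauto
          rw [hset]
          exact colorable_induce_union G _ _ hcol (colorable_induce_singleton G a)
        have hN_col : (G.induce N).Colorable (tA.card * (F k + 1)) :=
          colorable_induce_biUnion G Nb tA hNa_col
        have htAcard : tA.card ≤ Fintype.card W := by
          calc tA.card ≤ (Finset.univ : Finset ↥c.supp).card := Finset.card_image_le
            _ = Fintype.card ↥c.supp := Finset.card_univ
            _ ≤ Fintype.card W := Fintype.card_le_of_injective _ Subtype.val_injective
        have hfreeNc : ¬ Nonempty ((H.induce c.suppᶜ) ↪g G.induce Nᶜ) := by
          rintro ⟨ψ⟩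
          refine hfree (glue_embedding c φ ?_ ?_ ψ)
          · intro a
            exact Set.mem_iUnion₂.mpr ⟨φ a, htAmem a, Or.inl rfl⟩
          · intro a v hadj
            exact Set.mem_iUnion₂.mpr ⟨φ a, htAmem a, Or.inr hadj⟩
        have hb2 := hf2 ↥(Nᶜ) (G.induce Nᶜ) hfreeNc
        rw [chromaticNumber_le_iff_colorable] at hb2
        have hclNc : (G.induce Nᶜ).cliqueNum ≤ k + 1 :=
          le_trans (cliqueNum_le_of_embedding (SimpleGraph.Embedding.induce Nᶜ)) hk
        have hb2' : (G.induce Nᶜ).Colorable (g2 (k+1)) := hb2.mono (hg2 hclNc)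
        have hfin : (G.induce (N ∪ Nᶜ)).Colorable (Fintype.card W * (F k + 1) + g2 (k+1)) :=
          colorable_induce_union G N Nᶜ (hN_col.mono (Nat.mul_le_mul_right _ htAcard)) hb2'
        rw [Set.union_compl_self] at hfin
        have hG : G.Colorable (Fintype.card W * (F k + 1) + g2 (k+1)) :=
          hfin.of_hom (G.induceUnivIso.symm.toEmbedding.toHom)
        refine hG.mono ?_
        show Fintype.card W * (F k + 1) + g2 (k+1) ≤
          g1 (k+1) + g2 (k+1) + Fintype.card W * (F k + 1)
        omega
  refine ⟨F, fun V _ G hfree => ?_⟩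
  rw [chromaticNumber_le_iff_colorable]
  exact key G.cliqueNum V G hfree le_rfl
lemma components_chiBounding : ∀ (n : ℕ) (W : Type) [Fintype W] (H : SimpleGraph W),
    Fintype.card W ≤ n → (∀ c : H.ConnectedComponent, ChiBounding (H.induce c.supp)) →
    ChiBounding H := by
  intro n
  induction n with
  | zero =>
    intro W _ H hc _
    haveI : IsEmpty W := Fintype.card_eq_zero_iff.mp (le_antisymm hc (Nat.zero_le _))
    exact chiBounding_of_isEmpty H
  | succ n ih =>
    intro W _ H hcard hcomp
    cases isEmpty_or_nonempty W with
    | inl h => exact chiBounding_of_isEmpty H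
    | inr h =>
      obtain ⟨w⟩ := h
      classical
      set c := H.connectedComponentMk w with hc
      refine union_step H c (hcomp c) ?_
      refine ih ↥(c.suppᶜ) (H.induce c.suppᶜ) ?_ ?_
      · have hw : w ∈ c.supp := (ConnectedComponent.mem_supp_iff _ _).mpr rfl
        have h1 : Fintype.card ↥(c.suppᶜ) < Fintype.card W :=
          Fintype.card_subtype_lt (x := w) (by simpa using hw)
        omega
      · intro c'
        obtain ⟨d, ⟨iso⟩⟩ := comp_compl_iso c c'
        exact chiBounding_anti iso.toEmbedding (hcomp d)

/-- A forest `H` is χ-bounding if and only if every component of `H` is χ-bounding. -/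
theorem forest_chiBounding_iff_components {W : Type} [Fintype W]
    (H : SimpleGraph W) (hH : H.IsAcyclic) :
    ChiBounding H ↔ ∀ c : H.ConnectedComponent, ChiBounding (H.induce c.supp) := by
  constructor
  · intro h c
    exact chiBounding_anti (SimpleGraph.Embedding.induce c.supp) h
  · intro h
    exact components_chiBounding (Fintype.card W) W H le_rfl h
end

section
/- If H is the disjoint union of nonempty forests H₁ and H₂, both of which are χ-bounding, then H is χ-bounding. -/
open SimpleGraph


/-- A graph `H` is χ-bounding if the class of graphs with no induced subgraph isomorphic
to `H` is χ-bounded: there is a function `f` with `χ(G) ≤ f(ω(G))` for every finite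
`H`-free graph `G`. -/


lemma aux_cliqueNum_le_of_embedding {α β : Type*} [Fintype α] [Fintype β]
    {A : SimpleGraph α} {B : SimpleGraph β} (f : A ↪g B) : A.cliqueNum ≤ B.cliqueNum := by
  classical
  obtain ⟨s, hs⟩ := A.exists_isNClique_cliqueNum
  have hc : B.IsClique (s.image f : Finset β) := by
    intro x hx y hy hxy
    simp only [Finset.coe_image, Set.mem_image, Finset.mem_coe] at hx hy
    obtain ⟨a, ha, rfl⟩ := hx
    obtain ⟨b, hb, rfl⟩ := hy
    exact f.map_rel_iff.mpr (hs.isClique ha hb (fun h => hxy (by rw [h])))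
  have hcard : (s.image f).card = A.cliqueNum := by
    rw [Finset.card_image_of_injective _ f.injective, hs.card_eq]
  calc A.cliqueNum = (s.image f).card := hcard.symm
    _ ≤ B.cliqueNum := IsClique.card_le_cliqueNum (tc := hc)

lemma aux_cliqueNum_neighborSet {V : Type*} [Fintype V] (G : SimpleGraph V) (v : V) :
    (SimpleGraph.induce (G.neighborSet v) G).cliqueNum + 1 ≤ G.cliqueNum := by
  classical
  obtain ⟨s, hs⟩ := (SimpleGraph.induce (G.neighborSet v) G).exists_isNClique_cliqueNum
  set t : Finset V := s.image Subtype.val with ht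
  have htmem : ∀ x ∈ t, G.Adj v x := by
    intro x hx
    simp only [ht, Finset.mem_image] at hx
    obtain ⟨a, _, rfl⟩ := hx
    exact a.2
  have hvt : v ∉ t := fun h => G.irrefl (htmem v h)
  have hc : G.IsClique (insert v t : Finset V) := by
    rw [Finset.coe_insert]
    rw [SimpleGraph.isClique_insert_of_notMem (by exact_mod_cast hvt)]
    constructor
    · intro x hx y hy hxy
      simp only [ht, Finset.coe_image, Set.mem_image, Finset.mem_coe] at hx hy
      obtain ⟨a, ha, rfl⟩ := hx
      obtain ⟨b, hb, rfl⟩ := hy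
      have := hs.isClique ha hb (fun h => hxy (by rw [h]))
      simpa using this
    · exact fun b hb => htmem b (by exact_mod_cast hb)
  have hcard : (insert v t).card = (SimpleGraph.induce (G.neighborSet v) G).cliqueNum + 1 := by
    rw [Finset.card_insert_of_notMem hvt, ht,
      Finset.card_image_of_injective _ Subtype.val_injective, hs.card_eq]
  calc _ = (insert v t).card := hcard.symm
    _ ≤ G.cliqueNum := IsClique.card_le_cliqueNum (tc := hc)

def aux_sum_embedding {W₁ W₂ V : Type*} {H₁ : SimpleGraph W₁} {H₂ : SimpleGraph W₂}
    {G : SimpleGraph V} (e : H₁ ↪g G) {R : Set V}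
    (hR : ∀ v ∈ R, ∀ w, ¬ G.Adj (e w) v) (hRC : ∀ v ∈ R, ∀ w, e w ≠ v)
    (e₂ : H₂ ↪g SimpleGraph.induce R G) : H₁ ⊕g H₂ ↪g G where
  toFun := Sum.elim (fun w => e w) (fun x => (e₂ x).val)
  inj' := by
    intro a b h
    cases a <;> cases b <;> simp only [Sum.elim_inl, Sum.elim_inr] at h
    · exact congrArg Sum.inl (e.injective h)
    · exact absurd h (hRC _ (e₂ _).2 _)
    · exact absurd h.symm (hRC _ (e₂ _).2 _)
    · exact congrArg Sum.inr (e₂.injective (Subtype.val_injective h))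
  map_rel_iff' := by
    intro a b
    cases a <;> cases b <;>
      simp only [Function.Embedding.coeFn_mk, Sum.elim_inl, Sum.elim_inr, SimpleGraph.sum_adj]
    · exact e.map_rel_iff
    · exact iff_of_false (hR _ (e₂ _).2 _) (by simp)
    · exact iff_of_false (fun h => hR _ (e₂ _).2 _ h.symm) (by simp)
    · exact (comap_adj.trans (by rfl)).symm.trans e₂.map_rel_iff |>.symm |>.symm


/-- If `H` is the disjoint union of nonempty forests `H₁` and `H₂`, both χ-bounding,
then `H` is χ-bounding. -/
theorem disjUnion_chiBounding {W₁ W₂ : Type} [Fintype W₁] [Fintype W₂]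
    [Nonempty W₁] [Nonempty W₂]
    (H₁ : SimpleGraph W₁) (H₂ : SimpleGraph W₂)
    (h₁forest : H₁.IsAcyclic) (h₂forest : H₂.IsAcyclic)
    (h₁ : ChiBounding H₁) (h₂ : ChiBounding H₂) :
    ChiBounding (H₁ ⊕g H₂) := by
  classical
  obtain ⟨f₁, hf₁⟩ := h₁
  obtain ⟨f₂, hf₂⟩ := h₂
  set c := Fintype.card W₁ with hc
  set F₁ : ℕ → ℕ := fun n => (Finset.range (n + 1)).sup f₁ with hF₁
  set F₂ : ℕ → ℕ := fun n => (Finset.range (n + 1)).sup f₂ with hF₂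
  have hF₁le : ∀ {k n : ℕ}, k ≤ n → f₁ k ≤ F₁ n := fun {k n} h =>
    Finset.le_sup (Finset.mem_range.mpr (Nat.lt_succ_of_le h))
  have hF₂le : ∀ {k n : ℕ}, k ≤ n → f₂ k ≤ F₂ n := fun {k n} h =>
    Finset.le_sup (Finset.mem_range.mpr (Nat.lt_succ_of_le h))
  set g : ℕ → ℕ := fun n =>
    Nat.rec 0 (fun n ih => max (F₁ (n + 1)) (c + (c * ih + F₂ (n + 1)))) n with hg
  have key : ∀ (n : ℕ) (V : Type) [Fintype V] (G : SimpleGraph V),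
      ¬ Nonempty (H₁ ⊕g H₂ ↪g G) → G.cliqueNum ≤ n → G.Colorable (g n) := by
    intro n
    induction n with
    | zero =>
      intro V _ G hfree hclique
      have hV : IsEmpty V := by
        by_contra h
        rw [not_isEmpty_iff] at h
        obtain ⟨v⟩ := h
        have h1 : G.IsClique (({v} : Finset V) : Set V) := by
          simp
        have h2 := IsClique.card_le_cliqueNum (tc := h1)
        simp at h2
        omega
      exact SimpleGraph.Colorable.of_isEmpty (G := G) _
    | succ n ih =>
      intro V _ G hfree hclique
      have hgsucc : g (n + 1) = max (F₁ (n + 1)) (c + (c * g n + F₂ (n + 1))) := rfl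
      by_cases hH₁ : Nonempty (H₁ ↪g G)
      · obtain ⟨e⟩ := hH₁
        set R : Set V := {v | (∀ w, ¬ G.Adj (e w) v) ∧ ∀ w, e w ≠ v} with hRdef
        -- the far part is H₂-free
        have hRfree : ¬ Nonempty (H₂ ↪g SimpleGraph.induce R G) := by
          rintro ⟨e₂⟩
          exact hfree ⟨aux_sum_embedding e (fun v hv => hv.1) (fun v hv => hv.2) e₂⟩
        have hRclique : (SimpleGraph.induce R G).cliqueNum ≤ n + 1 :=
          le_trans (aux_cliqueNum_le_of_embedding (SimpleGraph.Embedding.induce R)) hclique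
        have hRcol : (SimpleGraph.induce R G).Colorable (F₂ (n + 1)) := by
          have h3 := hf₂ _ (SimpleGraph.induce R G) hRfree
          rw [chromaticNumber_le_iff_colorable] at h3
          exact h3.mono (hF₂le hRclique)
        obtain ⟨cR⟩ := hRcol
        -- neighborhoods have smaller clique number
        have hNcol : ∀ w : W₁,
            (SimpleGraph.induce (G.neighborSet (e w)) G).Colorable (g n) := by
          intro w
          apply ih
          · rintro ⟨e'⟩
            exact hfree ⟨e'.trans (SimpleGraph.Embedding.induce _)⟩
          · have h4 := aux_cliqueNum_neighborSet G (e w)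
            omega
        have cN : ∀ w : W₁,
            (SimpleGraph.induce (G.neighborSet (e w)) G).Coloring (Fin (g n)) :=
          fun w => (hNcol w).some
        -- assemble the coloring
        set T := W₁ ⊕ ((W₁ × Fin (g n)) ⊕ Fin (F₂ (n + 1))) with hT
        let col : V → T := fun v =>
          if hv : ∃ w, e w = v then Sum.inl hv.choose
          else if hv2 : ∃ w, G.Adj (e w) v then
            Sum.inr (Sum.inl (hv2.choose, cN hv2.choose ⟨v, hv2.choose_spec⟩))
          else Sum.inr (Sum.inr (cR ⟨v,
            ⟨fun w hw => hv2 ⟨w, hw⟩, fun w hw => hv ⟨w, hw⟩⟩⟩))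
        have hmid : ∀ (a b : V), G.Adj a b → ∀ (w₁ w₂ : W₁)
            (pa : G.Adj (e w₁) a) (pb : G.Adj (e w₂) b),
            (Sum.inr (Sum.inl (w₁, cN w₁ ⟨a, pa⟩)) : T)
              ≠ Sum.inr (Sum.inl (w₂, cN w₂ ⟨b, pb⟩)) := by
          intro a b hab w₁ w₂ pa pb hEq
          simp only [Sum.inr.injEq, Sum.inl.injEq, Prod.mk.injEq] at hEq
          obtain ⟨hw, hcol⟩ := hEq
          subst hw
          exact (cN w₁).valid (v := ⟨a, pa⟩) (w := ⟨b, pb⟩) hab hcol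
        have hfar : ∀ (a b : V), G.Adj a b → ∀ (pa : a ∈ R) (pb : b ∈ R),
            (Sum.inr (Sum.inr (cR ⟨a, pa⟩)) : T) ≠ Sum.inr (Sum.inr (cR ⟨b, pb⟩)) := by
          intro a b hab pa pb hEq
          exact cR.valid (v := ⟨a, pa⟩) (w := ⟨b, pb⟩) hab
            (Sum.inr_injective (Sum.inr_injective hEq))
        have hvalid : ∀ {a b : V}, G.Adj a b → col a ≠ col b := by
          intro a b hab hEq
          dsimp only [col] at hEq
          split_ifs at hEq with h1 h2 h3 h4 h5 h6 h7
          · rw [Sum.inl.injEq] at hEq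
            exact hab.ne (h1.choose_spec ▸ h2.choose_spec ▸ congrArg e hEq)
          all_goals
            first
            | exact hmid a b hab _ _ _ _ hEq
            | exact Sum.inl_ne_inr hEq
            | exact Sum.inr_ne_inl hEq
            | exact Sum.inl_ne_inr (Sum.inr_injective hEq)
            | exact Sum.inr_ne_inl (Sum.inr_injective hEq)
            | exact hfar a b hab _ _ hEq
        have hcolor : G.Colorable (Fintype.card T) := (Coloring.mk col hvalid).colorable
        have hcard : Fintype.card T = c + (c * g n + F₂ (n + 1)) := by
          simp [hT, hc]
        rw [hcard] at hcolor
        exact hcolor.mono (hgsucc ▸ le_max_right _ _)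
      · have h3 := hf₁ _ G hH₁
        rw [chromaticNumber_le_iff_colorable] at h3
        exact (h3.mono (hF₁le hclique)).mono (hgsucc ▸ le_max_left _ _)
  refine ⟨g, fun V _ G hfree => ?_⟩
  rw [chromaticNumber_le_iff_colorable]
  exact key _ V G hfree le_rfl
end

section
/- If g ≥ 3 and a graph H contains a cycle of length g, then for every k there exists an H-free graph with clique number at most 2 and chromatic number greater than k; consequently every χ-bounding graph is a forest. -/
open Finset SimpleGraph

open Finset SimpleGraph

lemma getVert_eq_support_getElem {V : Type*} {G : SimpleGraph V} {u v : V} (p : G.Walk u v)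
    (i : ℕ) (h : i < p.support.length) : p.support[i] = p.getVert i := by
  induction p generalizing i with
  | nil =>
    simp only [Walk.support_nil, List.length_singleton] at h
    interval_cases i <;> simp
  | cons h' q ih =>
    cases i with
    | zero => simp
    | succ j =>
      simp only [Walk.support_cons, List.getElem_cons_succ]
      exact ih j (by simpa [Walk.length_support] using h)

lemma SimpleGraph.Walk.IsCycle.getVert_inj {V : Type*} {G : SimpleGraph V} {v : V} {p : G.Walk v v}
    (hp : p.IsCycle) {i j : ℕ} (hi : i < p.length) (hj : j < p.length)
    (hij : p.getVert i = p.getVert j) : i = j := by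
  have hnd : p.support.tail.Nodup := hp.2
  have hlen : p.support.length = p.length + 1 := p.length_support
  have htl : p.support.tail.length = p.length := by
    cases hs : p.support with
    | nil => simp [hs] at hlen
    | cons a l => simp [hs] at hlen ⊢; omega
  have key : ∀ k : ℕ, (hk : k < p.length) → p.support.tail[k] = p.getVert (k+1) := by
    intro k hk
    rw [List.getElem_tail, getVert_eq_support_getElem]
    omega
  -- reduce to tail indices
  have main : ∀ a b : ℕ, a < p.length → b < p.length → 0 < a → 0 < b →
      p.getVert a = p.getVert b → a = b := by
    intro a b ha hb ha0 hb0 hab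
    have h1 : p.support.tail[a-1]'(by omega) = p.getVert a := by
      rw [key (a-1) (by omega)]; congr 1; omega
    have h2 : p.support.tail[b-1]'(by omega) = p.getVert b := by
      rw [key (b-1) (by omega)]; congr 1; omega
    have := (hnd.getElem_inj_iff (i := a-1) (j := b-1)).mp (by rw [h1, h2, hab])
    omega
  rcases Nat.eq_zero_or_pos i with rfl | hi0
  · rcases Nat.eq_zero_or_pos j with rfl | hj0
    · rfl
    · exfalso
      have h3 : 3 ≤ p.length := hp.three_le_length
      have hv : p.getVert j = p.getVert p.length := by
        rw [p.getVert_length]; rw [← hij, p.getVert_zero]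
      have hlast : p.support.tail[p.length - 1]'(by omega) = p.getVert p.length := by
        rw [key (p.length - 1) (by omega)]; congr 1; omega
      have hjj : p.support.tail[j-1]'(by omega) = p.getVert j := by
        rw [key (j-1) (by omega)]; congr 1; omega
      have := (hnd.getElem_inj_iff (i := j-1) (j := p.length - 1)).mp
        (by rw [hjj, hlast, hv])
      omega
  · rcases Nat.eq_zero_or_pos j with rfl | hj0
    · exfalso
      have h3 : 3 ≤ p.length := hp.three_le_length
      have hv : p.getVert i = p.getVert p.length := by
        rw [p.getVert_length]; rw [hij, p.getVert_zero]
      have hlast : p.support.tail[p.length - 1]'(by omega) = p.getVert p.length := by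
        rw [key (p.length - 1) (by omega)]; congr 1; omega
      have hii : p.support.tail[i-1]'(by omega) = p.getVert i := by
        rw [key (i-1) (by omega)]; congr 1; omega
      have := (hnd.getElem_inj_iff (i := i-1) (j := p.length - 1)).mp
        (by rw [hii, hlast, hv])
      omega
    · exact main i j hi hj hi0 hj0 hij

lemma finRotate_val {ℓ : ℕ} (h1 : 1 ≤ ℓ) (j : Fin ℓ) :
    ((finRotate ℓ j : Fin ℓ) : ℕ) = if (j : ℕ) = ℓ - 1 then 0 else (j : ℕ) + 1 := by
  obtain ⟨k, rfl⟩ : ∃ k, ℓ = k + 1 := ⟨ℓ - 1, by omega⟩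
  rw [finRotate_succ_apply, Fin.val_add_one]
  simp [Fin.ext_iff, Fin.val_last]


section B
variable {n t : ℕ}

def graphOf (f : Sym2 (Fin n) → Fin t) : SimpleGraph (Fin n) where
  Adj i j := i ≠ j ∧ (f s(i,j)).val = 0
  symm := by
    constructor
    intro i j h
    exact ⟨h.1.symm, by rw [Sym2.eq_swap]; exact h.2⟩
  loopless := ⟨fun i h => h.1 rfl⟩

lemma graphOf_adj (f : Sym2 (Fin n) → Fin t) (i j : Fin n) :
    (graphOf f).Adj i j ↔ i ≠ j ∧ (f s(i,j)).val = 0 := Iff.rfl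

/-- A cyclic tuple realized in the graph of `f`. -/
def IsCycTuple (f : Sym2 (Fin n) → Fin t) (ℓ : ℕ) (v : Fin ℓ → Fin n) : Prop :=
  Function.Injective v ∧ ∀ j, (graphOf f).Adj (v j) (v (finRotate ℓ j))

lemma cycle_tuple {v : Fin n} {f : Sym2 (Fin n) → Fin t} {w : (graphOf f).Walk v v}
    (hc : w.IsCycle) :
    IsCycTuple f w.length (fun j : Fin w.length => w.getVert j) ∧
    w.getVert (0:ℕ) = v := by
  have h3 : 3 ≤ w.length := hc.three_le_length
  refine ⟨⟨?_, ?_⟩, w.getVert_zero⟩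
  · intro i j hij
    exact Fin.ext (hc.getVert_inj i.isLt j.isLt hij)
  · intro j
    have hrot := finRotate_val (ℓ := w.length) (by omega) j
    dsimp only
    by_cases hlast : (j : ℕ) = w.length - 1
    · rw [hrot, if_pos hlast]
      have := w.adj_getVert_succ (i := w.length - 1) (by omega)
      have he : w.length - 1 + 1 = w.length := by omega
      rw [he] at this
      have h0 : w.getVert w.length = w.getVert 0 := by
        rw [w.getVert_length, w.getVert_zero]
      rw [h0] at this
      rwa [hlast]
    · rw [hrot, if_neg hlast]
      exact w.adj_getVert_succ (by have := j.isLt; omega)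

lemma cycTuple_edge_inj {ℓ : ℕ} (h3 : 3 ≤ ℓ)
    {v : Fin ℓ → Fin n} (hv : Function.Injective v) :
    Function.Injective (fun j : Fin ℓ => s(v j, v (finRotate ℓ j))) := by
  intro i j hij
  simp only [Sym2.eq, Sym2.rel_iff', Prod.mk.injEq, Prod.swap_prod_mk] at hij
  rcases hij with ⟨h1, _⟩ | ⟨h1, h2⟩
  · exact hv h1
  · exfalso
    have e1 : i = finRotate ℓ j := hv h1
    have e2 : finRotate ℓ i = j := hv h2
    obtain ⟨k, rfl⟩ : ∃ k, ℓ = k + 1 := ⟨ℓ - 1, by omega⟩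
    rw [finRotate_succ_apply] at e1 e2
    rw [e1] at e2
    have e3 : ((j + 1 + 1 : Fin (k+1)) : ℕ) = (j : ℕ) := by rw [e2]
    have l1 : ((j + 1 : Fin (k+1)) : ℕ) = if j = Fin.last k then 0 else (j : ℕ) + 1 :=
      Fin.val_add_one j
    have l2 : ((j + 1 + 1 : Fin (k+1)) : ℕ) =
        if j + 1 = Fin.last k then 0 else ((j + 1 : Fin (k+1)) : ℕ) + 1 :=
      Fin.val_add_one _
    simp only [Fin.ext_iff, Fin.val_last] at l1 l2
    have hj := j.isLt
    split_ifs at l1 l2 <;> omega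
end B

section C
variable {β γ : Type*} [Fintype β] [DecidableEq β] [Fintype γ] [DecidableEq γ]

lemma card_filter_forall_mem (P : Finset β) (A : Finset γ) :
    (univ.filter (fun f : β → γ => ∀ e ∈ P, f e ∈ A)).card
      = A.card ^ P.card * (Fintype.card γ) ^ (Fintype.card β - P.card) := by
  have h1 : (univ.filter (fun f : β → γ => ∀ e ∈ P, f e ∈ A))
      = Fintype.piFinset (fun e => if e ∈ P then A else univ) := by
    ext f
    simp only [mem_filter, mem_univ, true_and, Fintype.mem_piFinset]
    constructor
    · intro h e
      by_cases he : e ∈ P <;> simp [he, h e]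
    · intro h e he
      have := h e
      rwa [if_pos he] at this
  rw [h1, Fintype.card_piFinset]
  rw [← Finset.prod_mul_prod_compl P]
  have h2 : ∀ e ∈ P, (if e ∈ P then A else (univ : Finset γ)).card = A.card := by
    intro e he; rw [if_pos he]
  have h3 : ∀ e ∈ Pᶜ, (if e ∈ P then A else (univ : Finset γ)).card = Fintype.card γ := by
    intro e he; rw [if_neg (mem_compl.mp he), card_univ]
  rw [Finset.prod_congr rfl h2, Finset.prod_congr rfl h3, prod_const, prod_const,
    card_compl]
end C

section D
variable {α : Type*} [DecidableEq α]

lemma card_sym2_offDiag (S : Finset α) :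
    (S.sym2.filter (fun e => ¬ e.IsDiag)).card = S.card.choose 2 := by
  have hsplit := Finset.card_filter_add_card_filter_not
    (s := S.sym2) (p := fun e => e.IsDiag)
  have hdiag : S.sym2.filter (fun e => e.IsDiag) = S.image Sym2.diag := by
    ext e
    induction e using Sym2.ind with
    | _ x y =>
      simp only [mem_filter, Finset.mk_mem_sym2_iff, Sym2.mk_isDiag_iff, mem_image]
      constructor
      · rintro ⟨⟨hx, -⟩, rfl⟩
        exact ⟨x, hx, rfl⟩
      · rintro ⟨z, hz, he⟩
        rw [Sym2.diag, Sym2.eq_iff] at he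
        obtain ⟨rfl, rfl⟩ : z = x ∧ z = y := by tauto
        exact ⟨⟨hz, hz⟩, rfl⟩
  have hcard : (S.image Sym2.diag).card = S.card :=
    Finset.card_image_of_injective _ Sym2.diag_injective
  have hs2 : S.sym2.card = (S.card + 1).choose 2 := Finset.card_sym2 S
  have hch : (S.card + 1).choose 2 = S.card.choose 1 + S.card.choose 2 :=
    Nat.choose_succ_succ _ _
  have h1 : S.card.choose 1 = S.card := Nat.choose_one_right _
  rw [hdiag] at hsplit
  omega

lemma markov_count {β : Type*} [Fintype β] [DecidableEq β] (s : ℕ) (F : β → ℕ) :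
    s * (univ.filter (fun f => s ≤ F f)).card ≤ ∑ f, F f := by
  calc s * (univ.filter (fun f => s ≤ F f)).card
      = ∑ f ∈ univ.filter (fun f => s ≤ F f), s := by rw [sum_const, smul_eq_mul, mul_comm]
    _ ≤ ∑ f ∈ univ.filter (fun f => s ≤ F f), F f := by
        apply sum_le_sum; intro i hi; exact (mem_filter.mp hi).2
    _ ≤ ∑ f, F f := sum_le_sum_of_subset (filter_subset _ _)

end D
section E
open Function
variable {n t : ℕ}

local notation "N" => Fintype.card (Sym2 (Fin n))

instance (f : Sym2 (Fin n) → Fin t) : DecidableRel (graphOf f).Adj :=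
  fun i j => inferInstanceAs (Decidable (i ≠ j ∧ (f s(i,j) : ℕ) = 0))

instance (f : Sym2 (Fin n) → Fin t) (ℓ : ℕ) : DecidablePred (IsCycTuple f ℓ) :=
  fun v => inferInstanceAs (Decidable (_ ∧ _))

lemma card_A0 (ht : 1 ≤ t) : (univ.filter (fun x : Fin t => (x : ℕ) = 0)).card = 1 := by
  rw [Finset.card_eq_one]
  exact ⟨⟨0, ht⟩, by ext x; simp [Fin.ext_iff]⟩

lemma card_A1 (ht : 1 ≤ t) : (univ.filter (fun x : Fin t => (x : ℕ) ≠ 0)).card = t - 1 := by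
  have := Finset.card_filter_add_card_filter_not
    (s := (univ : Finset (Fin t))) (p := fun x => (x : ℕ) = 0)
  have h0 := card_A0 (t := t) ht
  simp only [card_univ, Fintype.card_fin, ne_eq] at this ⊢
  omega

/-- number of realized cyclic ℓ-tuples -/
def T (f : Sym2 (Fin n) → Fin t) (ℓ : ℕ) : ℕ :=
  (univ.filter (fun v : Fin ℓ → Fin n => IsCycTuple f ℓ v)).card

/-- number of realized short cyclic tuples -/
def X (g : ℕ) (f : Sym2 (Fin n) → Fin t) : ℕ := ∑ ℓ ∈ Finset.Icc 3 g, T f ℓ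

lemma count_tuple (ht : 1 ≤ t) {ℓ : ℕ} (h3 : 3 ≤ ℓ) (hN : ℓ ≤ N) (v : Fin ℓ → Fin n) :
    (univ.filter (fun f : Sym2 (Fin n) → Fin t => IsCycTuple f ℓ v)).card ≤ t ^ (N - ℓ) := by
  by_cases hinj : Function.Injective v
  · set P : Finset (Sym2 (Fin n)) :=
      univ.image (fun j : Fin ℓ => s(v j, v (finRotate ℓ j))) with hP
    have hPcard : P.card = ℓ := by
      rw [hP, Finset.card_image_of_injective _ (cycTuple_edge_inj h3 hinj), card_univ,
        Fintype.card_fin]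
    have hsub : (univ.filter (fun f : Sym2 (Fin n) → Fin t => IsCycTuple f ℓ v)) ⊆
        univ.filter (fun f => ∀ e ∈ P, f e ∈ univ.filter (fun x : Fin t => (x : ℕ) = 0)) := by
      intro f hf
      rw [Finset.mem_filter] at hf ⊢
      refine ⟨Finset.mem_univ _, ?_⟩
      intro e he
      rw [hP, Finset.mem_image] at he
      obtain ⟨j, -, rfl⟩ := he
      simp only [Finset.mem_filter, Finset.mem_univ, true_and]
      exact (hf.2.2 j).2
    calc _ ≤ _ := Finset.card_le_card hsub
      _ = 1 ^ P.card * t ^ (N - P.card) := by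
          rw [card_filter_forall_mem, card_A0 ht, Fintype.card_fin]
      _ ≤ t ^ (N - ℓ) := by rw [hPcard, one_pow, one_mul]
  · have : (univ.filter (fun f : Sym2 (Fin n) → Fin t => IsCycTuple f ℓ v)) = ∅ := by
      rw [Finset.filter_eq_empty_iff]
      intro f _ hf
      exact hinj hf.1
    simp [this]

lemma sum_T_le (ht : 1 ≤ t) {ℓ : ℕ} (h3 : 3 ≤ ℓ) (hN : ℓ ≤ N) :
    ∑ f : Sym2 (Fin n) → Fin t, T f ℓ ≤ n ^ ℓ * t ^ (N - ℓ) := by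
  have hswap : ∑ f : Sym2 (Fin n) → Fin t, T f ℓ =
      ∑ v : Fin ℓ → Fin n,
        (univ.filter (fun f : Sym2 (Fin n) → Fin t => IsCycTuple f ℓ v)).card := by
    simp only [T, Finset.card_filter]
    rw [Finset.sum_comm]
  rw [hswap]
  calc ∑ v : Fin ℓ → Fin n, (univ.filter
        (fun f : Sym2 (Fin n) → Fin t => IsCycTuple f ℓ v)).card
      ≤ ∑ _v : Fin ℓ → Fin n, t ^ (N - ℓ) :=
        Finset.sum_le_sum (fun v _ => count_tuple ht h3 hN v)
    _ = n ^ ℓ * t ^ (N - ℓ) := by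
        rw [Finset.sum_const, card_univ, Fintype.card_fun, Fintype.card_fin, Fintype.card_fin,
          smul_eq_mul]

lemma sum_X_le (ht : 1 ≤ t) {g : ℕ} (hN : g ≤ N) :
    ∑ f : Sym2 (Fin n) → Fin t, X g f ≤ ∑ ℓ ∈ Finset.Icc 3 g, n ^ ℓ * t ^ (N - ℓ) := by
  unfold X
  rw [Finset.sum_comm]
  apply Finset.sum_le_sum
  intro ℓ hℓ
  rw [Finset.mem_Icc] at hℓ
  exact sum_T_le ht hℓ.1 (le_trans hℓ.2 hN)

/-- independence event -/
def IndepAt (f : Sym2 (Fin n) → Fin t) (S : Finset (Fin n)) : Prop :=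
  ∀ x ∈ S, ∀ y ∈ S, x ≠ y → (f s(x,y) : ℕ) ≠ 0

instance (f : Sym2 (Fin n) → Fin t) (S : Finset (Fin n)) : Decidable (IndepAt f S) := by
  unfold IndepAt; infer_instance

lemma card_indepAt (ht : 1 ≤ t) (S : Finset (Fin n)) :
    (univ.filter (fun f : Sym2 (Fin n) → Fin t => IndepAt f S)).card
      ≤ (t - 1) ^ (S.card.choose 2) * t ^ (N - S.card.choose 2) := by
  set P : Finset (Sym2 (Fin n)) := S.sym2.filter (fun e => ¬ e.IsDiag) with hP
  have hPcard : P.card = S.card.choose 2 := card_sym2_offDiag S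
  have hsub : (univ.filter (fun f : Sym2 (Fin n) → Fin t => IndepAt f S)) ⊆
      univ.filter (fun f => ∀ e ∈ P, f e ∈ univ.filter (fun x : Fin t => (x : ℕ) ≠ 0)) := by
    intro f hf
    rw [Finset.mem_filter] at hf ⊢
    refine ⟨Finset.mem_univ _, ?_⟩
    intro e he
    induction e using Sym2.ind with
    | _ x y =>
      rw [hP, Finset.mem_filter, Finset.mk_mem_sym2_iff, Sym2.mk_isDiag_iff] at he
      simp only [Finset.mem_filter, Finset.mem_univ, true_and]
      exact hf.2 x he.1.1 y he.1.2 he.2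
  calc _ ≤ _ := Finset.card_le_card hsub
    _ = (t-1) ^ P.card * t ^ (N - P.card) := by
        rw [card_filter_forall_mem, card_A1 ht, Fintype.card_fin]
    _ = _ := by rw [hPcard]

lemma card_exists_indep (ht : 1 ≤ t) (a : ℕ) :
    (univ.filter (fun f : Sym2 (Fin n) → Fin t =>
        ∃ S : Finset (Fin n), S.card = a ∧ IndepAt f S)).card
      ≤ n.choose a * ((t - 1) ^ (a.choose 2) * t ^ (N - a.choose 2)) := by
  have hsub : (univ.filter (fun f : Sym2 (Fin n) → Fin t =>
      ∃ S : Finset (Fin n), S.card = a ∧ IndepAt f S)) ⊆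
      (Finset.univ.powersetCard a).biUnion
        (fun S => univ.filter (fun f => IndepAt f S)) := by
    intro f hf
    rw [Finset.mem_filter] at hf
    obtain ⟨-, S, hS, hI⟩ := hf
    rw [Finset.mem_biUnion]
    exact ⟨S, by rw [Finset.mem_powersetCard_univ]; exact hS,
      by rw [Finset.mem_filter]; exact ⟨Finset.mem_univ _, hI⟩⟩
  calc _ ≤ _ := Finset.card_le_card hsub
    _ ≤ ∑ S ∈ Finset.univ.powersetCard a,
        (univ.filter (fun f : Sym2 (Fin n) → Fin t => IndepAt f S)).card :=
        Finset.card_biUnion_le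
    _ ≤ ∑ S ∈ Finset.univ.powersetCard a,
        ((t - 1) ^ (a.choose 2) * t ^ (N - a.choose 2)) := by
        apply Finset.sum_le_sum
        intro S hS
        rw [Finset.mem_powersetCard_univ] at hS
        simpa [hS] using card_indepAt ht S
    _ = _ := by
        rw [Finset.sum_const, smul_eq_mul, Finset.card_powersetCard, card_univ,
          Fintype.card_fin]

end E
section F
variable {n t : ℕ}

local notation "N" => Fintype.card (Sym2 (Fin n))

lemma two_mul_pred_pow_le (t : ℕ) (ht : 1 ≤ t) : 2 * (t - 1) ^ t ≤ t ^ t := by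
  rcases Nat.eq_or_lt_of_le ht with rfl | ht2
  · simp
  -- t ≥ 2; use (x+1)^t ≥ x^t + t * x^(t-1) with x = t-1
  obtain ⟨x, rfl⟩ : ∃ x, t = x + 1 := ⟨t - 1, by omega⟩
  have hx : 1 ≤ x := by omega
  have key : ∀ s : ℕ, x ^ s + s * x ^ (s - 1) ≤ (x + 1) ^ s := by
    intro s
    induction s with
    | zero => simp
    | succ s ih =>
      rcases Nat.eq_zero_or_pos s with rfl | hs
      · simp
      have hxs : x ^ (s - 1) * x = x ^ s := by
        rw [← pow_succ]; congr 1; omega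
      have step : (x ^ s + s * x ^ (s - 1)) * (x + 1) ≤ (x + 1) ^ s * (x + 1) :=
        Nat.mul_le_mul_right _ ih
      have expand : (x ^ s + s * x ^ (s - 1)) * (x + 1)
          = x ^ (s + 1) + (s + 1) * x ^ s + s * x ^ (s - 1) := by
        have h' : (x ^ s + s * x ^ (s - 1)) * (x + 1)
            = x ^ s * x + x ^ s + s * (x ^ (s - 1) * x) + s * x ^ (s - 1) := by ring
        rw [h', hxs, ← pow_succ]; ring
      calc x ^ (s + 1) + (s + 1) * x ^ s
          ≤ x ^ (s + 1) + (s + 1) * x ^ s + s * x ^ (s - 1) := Nat.le_add_right _ _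
        _ = (x ^ s + s * x ^ (s - 1)) * (x + 1) := expand.symm
        _ ≤ (x + 1) ^ s * (x + 1) := step
        _ = (x + 1) ^ (s + 1) := (pow_succ _ _).symm
  have h2 : x ^ (x + 1) ≤ (x + 1) * x ^ x := by
    rw [pow_succ]; nlinarith [pow_pos (by omega : 0 < x) x]
  calc 2 * (x + 1 - 1) ^ (x + 1) = x ^ (x + 1) + x ^ (x + 1) := by
        simp [Nat.add_sub_cancel, two_mul]
    _ ≤ x ^ (x + 1) + (x + 1) * x ^ x := by omega
    _ = x ^ (x + 1) + (x + 1) * x ^ ((x + 1) - 1) := by simp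
    _ ≤ (x + 1) ^ (x + 1) := key (x + 1)

lemma exists_good (g a s : ℕ) (ht : 1 ≤ t) (hs : 0 < s) (hgN : g ≤ N)
    (hC1 : 2 * (∑ ℓ ∈ Finset.Icc 3 g, n ^ ℓ * t ^ (N - ℓ)) < s * t ^ N)
    (hC2 : 2 * (n.choose a * ((t - 1) ^ (a.choose 2) * t ^ (N - a.choose 2))) < t ^ N) :
    ∃ f : Sym2 (Fin n) → Fin t, X g f < s ∧
      ∀ S : Finset (Fin n), S.card = a → ¬ IndepAt f S := by
  classical
  set bad1 := (univ.filter (fun f : Sym2 (Fin n) → Fin t => s ≤ X g f)) with hb1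
  set bad2 := (univ.filter (fun f : Sym2 (Fin n) → Fin t =>
    ∃ S : Finset (Fin n), S.card = a ∧ IndepAt f S)) with hb2
  have h1 : s * bad1.card ≤ ∑ f : Sym2 (Fin n) → Fin t, X g f := markov_count s (X g)
  have h1' : 2 * (s * bad1.card) < s * t ^ N := by
    calc 2 * (s * bad1.card) ≤ 2 * ∑ f : Sym2 (Fin n) → Fin t, X g f := by
          omega
      _ ≤ 2 * (∑ ℓ ∈ Finset.Icc 3 g, n ^ ℓ * t ^ (N - ℓ)) := by
          have := sum_X_le (n := n) ht hgN
          omega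
      _ < s * t ^ N := hC1
  have hbad1 : 2 * bad1.card < t ^ N := by
    have heq : s * (2 * bad1.card) = 2 * (s * bad1.card) := by ring
    have h'' : s * (2 * bad1.card) < s * t ^ N := by rw [heq]; exact h1'
    exact lt_of_mul_lt_mul_left h'' (Nat.zero_le s)
  have hbad2 : 2 * bad2.card < t ^ N := by
    have hb := card_exists_indep (n := n) ht a
    rw [← hb2] at hb
    omega
  have hcard : bad1.card + bad2.card < Fintype.card (Sym2 (Fin n) → Fin t) := by
    rw [Fintype.card_fun, Fintype.card_fin]
    omega
  have hex : ∃ f : Sym2 (Fin n) → Fin t, f ∉ bad1 ∪ bad2 := by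
    by_contra h
    push_neg at h
    have hsub : (univ : Finset (Sym2 (Fin n) → Fin t)) ⊆ bad1 ∪ bad2 := fun f _ => h f
    have hc1 := Finset.card_le_card hsub
    have hc2 := Finset.card_union_le bad1 bad2
    rw [card_univ] at hc1
    omega
  obtain ⟨f, hf⟩ := hex
  rw [Finset.mem_union] at hf
  push_neg at hf
  obtain ⟨hf1, hf2⟩ := hf
  rw [hb1, Finset.mem_filter] at hf1
  rw [hb2, Finset.mem_filter] at hf2
  push_neg at hf1 hf2
  refine ⟨f, ?_, ?_⟩
  · have := hf1 (Finset.mem_univ f)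
    omega
  · intro S hS hI
    exact hf2 (Finset.mem_univ f) S hS hI
end F
section G

lemma exists_good_concrete (g k : ℕ) (hg : 3 ≤ g) :
    ∃ (n t a : ℕ) (f : Sym2 (Fin n) → Fin t),
      1 ≤ a ∧
      2 * X g f ≤ n ∧
      2 * ((k + 1) * a) ≤ n ∧
      ∀ S : Finset (Fin n), S.card = a → ¬ IndepAt f S := by
  classical
  set c := 16 * g * (k + 1) with hc
  set j := 4 * c with hj
  set m := 2 ^ j with hm
  set t := m ^ (2 * g - 1) with ht
  set n := m ^ (2 * g) with hn
  set L := Nat.log 2 n + 1 with hL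
  set a := 2 * t * (L + 1) with ha
  set s := 4 * g * m ^ g with hs
  have hc1 : 48 ≤ c := by
    have : 1 ≤ k + 1 := by omega
    calc 48 = 16 * 3 * 1 := by norm_num
      _ ≤ 16 * g * (k + 1) := by
          apply Nat.mul_le_mul (Nat.mul_le_mul_left 16 hg) this
  have hm2 : 2 ≤ m := by
    rw [hm]
    calc 2 = 2 ^ 1 := (pow_one 2).symm
      _ ≤ 2 ^ j := Nat.pow_le_pow_right (by norm_num) (by omega)
  have hcjm : c * j < m := by
    have h1 : 2 * c < 2 ^ (2 * c) := Nat.lt_two_pow_self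
    have h2 : (2 * c) * (2 * c) < 2 ^ (2 * c) * 2 ^ (2 * c) :=
      Nat.mul_lt_mul_of_lt_of_lt h1 h1
    have h3 : 2 ^ (2 * c) * 2 ^ (2 * c) = m := by
      rw [hm, hj, ← pow_add]; congr 1; ring
    have h4 : c * j = (2 * c) * (2 * c) := by rw [hj]; ring
    omega
  have hnmt : n = m * t := by
    rw [hn, ht]
    obtain ⟨d, hd⟩ : ∃ d, 2 * g = d + 1 := ⟨2 * g - 1, by omega⟩
    have hd' : 2 * g - 1 = d := by omega
    rw [hd', hd, pow_succ]
    ring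
  have ht1 : 1 ≤ t := by
    rw [ht]
    exact Nat.one_le_pow _ _ (by omega)
  have ht2 : 2 ≤ t := by
    rw [ht]
    calc 2 ≤ m := hm2
      _ = m ^ 1 := (pow_one m).symm
      _ ≤ m ^ (2 * g - 1) := Nat.pow_le_pow_right (by omega) (by omega)
  have h16 : 16 * g ≤ c := by
    calc 16 * g = 16 * g * 1 := by ring
      _ ≤ 16 * g * (k + 1) := Nat.mul_le_mul_left _ (by omega)
      _ = c := hc.symm
  have hgm : 8 * g + 1 ≤ m := by
    have h4c : c * 4 ≤ c * j := Nat.mul_le_mul_left _ (by omega)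
    omega
  have hgmg : 8 * g < m ^ g := by
    calc 8 * g < m := by omega
      _ = m ^ 1 := (pow_one m).symm
      _ ≤ m ^ g := Nat.pow_le_pow_right (by omega) (by omega)
  have hLval : L = 2 * g * j + 1 := by
    rw [hL, hn, hm, ← pow_mul]
    rw [Nat.log_pow (by norm_num : 1 < 2)]
    ring
  have hn2L : n < 2 ^ L := Nat.lt_pow_succ_log_self (by norm_num) n
  have hMm : 4 * (L + 1) * (k + 1) ≤ m := by
    have e1 : 4 * (L + 1) * (k + 1) = 8 * (g * j + 1) * (k + 1) := by
      rw [hLval]; ring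
    have e2 : 8 * (g * j + 1) * (k + 1) ≤ 16 * (g * j) * (k + 1) := by
      have : g * j + 1 ≤ 2 * (g * j) := by
        have : 1 ≤ g * j := by
          have : 1 * 1 ≤ g * j := Nat.mul_le_mul (by omega) (by omega)
          omega
        omega
      calc 8 * (g * j + 1) * (k + 1) ≤ 8 * (2 * (g * j)) * (k + 1) := by
            apply Nat.mul_le_mul_right
            apply Nat.mul_le_mul_left
            exact this
        _ = 16 * (g * j) * (k + 1) := by ring
    have e3 : 16 * (g * j) * (k + 1) = c * j := by rw [hc]; ring
    omega
  have hka : 2 * ((k + 1) * a) ≤ n := by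
    have : 2 * ((k + 1) * a) = (4 * (L + 1) * (k + 1)) * t := by rw [ha]; ring
    rw [this, hnmt]
    exact Nat.mul_le_mul_right t hMm
  have ha2 : 2 ≤ a := by
    have : 2 * 1 * 1 ≤ 2 * t * (L + 1) := by
      apply Nat.mul_le_mul (Nat.mul_le_mul_left 2 ht1) (by omega)
    omega
  have haL : L + 2 ≤ a := by
    have : 2 * 1 * (L + 1) ≤ 2 * t * (L + 1) := by
      apply Nat.mul_le_mul_right
      omega
    omega
  have han : a ≤ n := by
    have : a ≤ (k + 1) * a := Nat.le_mul_of_pos_left a (by omega)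
    omega
  -- the Fintype card of Sym2
  have hNval : Fintype.card (Sym2 (Fin n)) = (n + 1).choose 2 := by
    rw [Sym2.card, Fintype.card_fin]
  have hnN : n ≤ Fintype.card (Sym2 (Fin n)) := by
    rw [hNval, Nat.choose_succ_succ, Nat.choose_one_right]
    omega
  have hgn : g ≤ n := by
    have h1 : g < 2 ^ g := Nat.lt_two_pow_self
    have h2 : (2:ℕ) ^ g ≤ m ^ g := Nat.pow_le_pow_left hm2 g
    have h3 : m ^ g ≤ m ^ (2 * g) := Nat.pow_le_pow_right (by omega) (by omega)
    omega
  have hgN : g ≤ Fintype.card (Sym2 (Fin n)) := le_trans hgn hnN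
  set N := Fintype.card (Sym2 (Fin n)) with hN
  -- condition C1
  have hC1 : 2 * (∑ ℓ ∈ Finset.Icc 3 g, n ^ ℓ * t ^ (N - ℓ)) < s * t ^ N := by
    have hterm : ∀ ℓ ∈ Finset.Icc 3 g, n ^ ℓ * t ^ (N - ℓ) ≤ m ^ g * t ^ N := by
      intro ℓ hℓ
      rw [Finset.mem_Icc] at hℓ
      have hℓN : ℓ ≤ N := le_trans hℓ.2 hgN
      have : n ^ ℓ * t ^ (N - ℓ) = m ^ ℓ * t ^ N := by
        rw [hnmt, mul_pow, mul_assoc, ← pow_add]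
        congr 2
        omega
      rw [this]
      apply Nat.mul_le_mul_right
      exact Nat.pow_le_pow_right (by omega) hℓ.2
    have hsum : (∑ ℓ ∈ Finset.Icc 3 g, n ^ ℓ * t ^ (N - ℓ))
        ≤ (g - 2) * (m ^ g * t ^ N) := by
      calc (∑ ℓ ∈ Finset.Icc 3 g, n ^ ℓ * t ^ (N - ℓ))
          ≤ ∑ _ℓ ∈ Finset.Icc 3 g, m ^ g * t ^ N := Finset.sum_le_sum hterm
        _ = (g - 2) * (m ^ g * t ^ N) := by
            rw [Finset.sum_const, Nat.card_Icc, smul_eq_mul]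
            have h32 : g + 1 - 3 = g - 2 := by omega
            rw [h32]
    have hpos : 0 < m ^ g * t ^ N :=
      Nat.mul_pos (Nat.pow_pos (by omega)) (Nat.pow_pos (by omega))
    calc 2 * (∑ ℓ ∈ Finset.Icc 3 g, n ^ ℓ * t ^ (N - ℓ))
        ≤ 2 * ((g - 2) * (m ^ g * t ^ N)) := by omega
      _ = (2 * (g - 2)) * (m ^ g * t ^ N) := by ring
      _ < (4 * g) * (m ^ g * t ^ N) := by
          apply mul_lt_mul_of_pos_right _ hpos
          omega
      _ = s * t ^ N := by rw [hs]; ring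
  -- condition C2
  have hEq : a.choose 2 = t * ((L + 1) * (a - 1)) := by
    rw [Nat.choose_two_right]
    have : a * (a - 1) = 2 * (t * ((L + 1) * (a - 1))) := by
      obtain ⟨b, hb⟩ : ∃ b, a = b + 1 := ⟨a - 1, by omega⟩
      have hb' : a - 1 = b := by omega
      rw [hb']
      nth_rewrite 1 [ha]
      ring
    rw [this]
    exact Nat.mul_div_cancel_left _ (by norm_num)
  have hEN : a.choose 2 ≤ N := by
    calc a.choose 2 ≤ n.choose 2 := Nat.choose_le_choose 2 han
      _ ≤ (n + 1).choose 2 := Nat.choose_le_choose 2 (by omega)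
      _ = N := hNval.symm
  have hC2 : 2 * (n.choose a * ((t - 1) ^ (a.choose 2) * t ^ (N - a.choose 2))) < t ^ N := by
    have hqLa : L * a + 1 ≤ (L + 1) * (a - 1) := by
      obtain ⟨b, hb⟩ : ∃ b, a = b + 1 := ⟨a - 1, by omega⟩
      have hbL : L + 1 ≤ b := by omega
      have hb' : a - 1 = b := by omega
      have h1 : (L + 1) * (a - 1) = L * b + b := by rw [hb']; ring
      have h2 : L * a + 1 = L * b + (L + 1) := by rw [hb]; ring
      omega
    have hchoose : 2 * n.choose a < 2 ^ ((L + 1) * (a - 1)) := by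
      have h1 : n.choose a ≤ n ^ a := Nat.choose_le_pow n a
      have h2 : n ^ a < (2 ^ L) ^ a := Nat.pow_lt_pow_left hn2L (by omega)
      have h3 : (2:ℕ) ^ (L * a + 1) ≤ 2 ^ ((L + 1) * (a - 1)) :=
        Nat.pow_le_pow_right (by norm_num) hqLa
      have h4 : 2 * (2 ^ L) ^ a = 2 ^ (L * a + 1) := by
        rw [← pow_mul, ← pow_succ']
      omega
    have hpow : 2 ^ ((L + 1) * (a - 1)) * (t - 1) ^ (a.choose 2) ≤ t ^ (a.choose 2) := by
      have h2 : (2 * (t - 1) ^ t) ^ ((L + 1) * (a - 1)) ≤ (t ^ t) ^ ((L + 1) * (a - 1)) :=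
        Nat.pow_le_pow_left (two_mul_pred_pow_le t ht1) _
      have h3 : (2 * (t - 1) ^ t) ^ ((L + 1) * (a - 1))
          = 2 ^ ((L + 1) * (a - 1)) * (t - 1) ^ (t * ((L + 1) * (a - 1))) := by
        rw [mul_pow, ← pow_mul]
      rw [hEq,
        show t ^ (t * ((L + 1) * (a - 1))) = (t ^ t) ^ ((L + 1) * (a - 1)) from pow_mul t t _,
        ← h3]
      exact h2
    have hpos1 : 0 < (t - 1) ^ (a.choose 2) := Nat.pow_pos (by omega)
    have hstrict : 2 * n.choose a * (t - 1) ^ (a.choose 2) < t ^ (a.choose 2) := by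
      calc 2 * n.choose a * (t - 1) ^ (a.choose 2)
          < 2 ^ ((L + 1) * (a - 1)) * (t - 1) ^ (a.choose 2) :=
            mul_lt_mul_of_pos_right hchoose hpos1
        _ ≤ t ^ (a.choose 2) := hpow
    calc 2 * (n.choose a * ((t - 1) ^ (a.choose 2) * t ^ (N - a.choose 2)))
        = (2 * n.choose a * (t - 1) ^ (a.choose 2)) * t ^ (N - a.choose 2) := by ring
      _ < t ^ (a.choose 2) * t ^ (N - a.choose 2) :=
          mul_lt_mul_of_pos_right hstrict (Nat.pow_pos (by omega))
      _ = t ^ N := by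
          rw [← pow_add]
          congr 1
          omega
  have hspos : 0 < s := by
    rw [hs]
    exact Nat.mul_pos (by omega) (Nat.pow_pos (by omega))
  obtain ⟨f, hXf, hIf⟩ := exists_good (n := n) (t := t) g a s ht1 hspos hgN hC1 hC2
  refine ⟨n, t, a, f, by omega, ?_, hka, hIf⟩
  have : 2 * s ≤ n := by
    have h1 : 2 * s = 8 * g * m ^ g := by rw [hs]; ring
    have h2 : 8 * g * m ^ g ≤ m ^ g * m ^ g := by
      apply Nat.mul_le_mul_right
      omega
    have h3 : m ^ g * m ^ g = n := by
      rw [hn, ← pow_add]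
      congr 1
      omega
    omega
  omega
end G
section H

lemma cliqueNum_le_two_of_no_triangle {V : Type*} (G : SimpleGraph V)
    (h : ∀ (v : V) (w : G.Walk v v), w.IsCycle → w.length ≠ 3) :
    G.cliqueNum ≤ 2 := by
  classical
  have hne : {n | ∃ s, G.IsNClique n s}.Nonempty := ⟨0, ∅, by simp⟩
  apply csSup_le hne
  rintro b ⟨S, hS⟩
  by_contra hb
  push_neg at hb
  obtain ⟨u, huS, hu3⟩ := Finset.exists_subset_card_eq
    (show 3 ≤ S.card by rw [hS.2]; omega)
  rw [Finset.card_eq_three] at hu3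
  obtain ⟨x, y, z, hxy, hxz, hyz, hu⟩ := hu3
  rw [hu] at huS
  have hmem : ∀ w, w ∈ ({x, y, z} : Finset V) → w ∈ (S : Set V) := fun w hw => huS hw
  have hax : G.Adj x y := hS.1 (hmem x (by simp)) (hmem y (by simp)) hxy
  have hay : G.Adj y z := hS.1 (hmem y (by simp)) (hmem z (by simp)) hyz
  have haz : G.Adj z x := hS.1 (hmem z (by simp)) (hmem x (by simp)) (Ne.symm hxz)
  set w : G.Walk x x := Walk.cons hax (Walk.cons hay (Walk.cons haz Walk.nil)) with hw
  have hcyc : w.IsCycle := by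
    rw [hw, Walk.cons_isCycle_iff]
    constructor
    · rw [Walk.cons_isPath_iff]
      constructor
      · rw [Walk.cons_isPath_iff]
        constructor
        · simp
        · simp only [Walk.support_nil, List.mem_cons, List.not_mem_nil, or_false]
          exact Ne.symm hxz
      · simp only [Walk.support_cons, Walk.support_nil, List.mem_cons, List.not_mem_nil, or_false]
        push_neg
        exact ⟨hyz, Ne.symm hxy⟩
    · simp only [Walk.edges_cons, Walk.edges_nil, List.mem_cons, List.not_mem_nil, or_false]
      intro hmem
      rcases hmem with h' | h' <;> rw [Sym2.eq_iff] at h'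
      · rcases h' with ⟨h1, -⟩ | ⟨h1, -⟩
        · exact hxy h1
        · exact hxz h1
      · rcases h' with ⟨h1, -⟩ | ⟨-, h2⟩
        · exact hxz h1
        · exact hyz h2
  exact h x w hcyc (by simp [hw])

end H
section I
open Finset

theorem main_construction (g k : ℕ) (hg : 3 ≤ g) :
    ∃ (V : Type) (_ : Fintype V) (G : SimpleGraph V),
      (∀ (v : V) (w : G.Walk v v), w.IsCycle → ¬ (w.length ≤ g)) ∧
      G.cliqueNum ≤ 2 ∧ (k : ℕ∞) < G.chromaticNumber := by
  classical
  obtain ⟨n, t, a, f, ha1, hX2, hka, hindep⟩ := exists_good_concrete g k hg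
  set G0 := graphOf f with hG0
  set B : Finset (Fin n) := univ.filter
    (fun v => ∃ w : G0.Walk v v, w.IsCycle ∧ w.length ≤ g) with hB
  have hBcard : B.card ≤ X g f := by
    have hsub : B ⊆ (Finset.Icc 3 g).biUnion (fun ℓ => univ.filter
        (fun v => ∃ w : G0.Walk v v, w.IsCycle ∧ w.length = ℓ)) := by
      intro v hv
      rw [hB, mem_filter] at hv
      obtain ⟨-, w, hc, hlen⟩ := hv
      rw [Finset.mem_biUnion]
      exact ⟨w.length, by rw [Finset.mem_Icc]; exact ⟨hc.three_le_length, hlen⟩,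
        by rw [mem_filter]; exact ⟨mem_univ _, w, hc, rfl⟩⟩
    calc B.card ≤ _ := Finset.card_le_card hsub
      _ ≤ ∑ ℓ ∈ Finset.Icc 3 g, (univ.filter
          (fun v => ∃ w : G0.Walk v v, w.IsCycle ∧ w.length = ℓ)).card :=
        Finset.card_biUnion_le
      _ ≤ ∑ ℓ ∈ Finset.Icc 3 g, T f ℓ := by
        apply Finset.sum_le_sum
        intro ℓ hℓ
        rw [Finset.mem_Icc] at hℓ
        have hpos : 0 < ℓ := by omega
        have key : ∀ v : Fin n, (∃ w : G0.Walk v v, w.IsCycle ∧ w.length = ℓ) →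
            ∃ c : Fin ℓ → Fin n, IsCycTuple f ℓ c ∧ c ⟨0, hpos⟩ = v := by
          rintro v ⟨w, hc, hlen⟩
          subst hlen
          obtain ⟨hct, h0⟩ := cycle_tuple hc
          exact ⟨_, hct, h0⟩
        apply Finset.card_le_card_of_injOn
          (fun v => if h : ∃ c : Fin ℓ → Fin n, IsCycTuple f ℓ c ∧ c ⟨0, hpos⟩ = v
            then h.choose else (fun _ => v))
        · intro v hv
          rw [Finset.coe_filter, Set.mem_setOf_eq] at hv
          have hex := key v hv.2
          simp only [dif_pos hex]
          rw [Finset.mem_coe, mem_filter]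
          exact ⟨mem_univ _, hex.choose_spec.1⟩
        · intro v hv v' hv' heq
          rw [Finset.coe_filter, Set.mem_setOf_eq] at hv hv'
          have hex := key v hv.2
          have hex' := key v' hv'.2
          simp only [dif_pos hex, dif_pos hex'] at heq
          calc v = hex.choose ⟨0, hpos⟩ := hex.choose_spec.2.symm
            _ = hex'.choose ⟨0, hpos⟩ := by rw [heq]
            _ = v' := hex'.choose_spec.2
      _ = X g f := rfl
  set s' : Finset (Fin n) := univ \ B with hs'
  set G : SimpleGraph {x : Fin n // x ∈ s'} :=
    G0.comap (Function.Embedding.subtype (· ∈ s')) with hG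
  have hemb : G ↪g G0 := SimpleGraph.Embedding.comap (Function.Embedding.subtype (· ∈ s')) G0
  have hNoShort : ∀ (v : {x : Fin n // x ∈ s'}) (w : G.Walk v v),
      w.IsCycle → ¬ (w.length ≤ g) := by
    intro v w hcyc hlen
    have hv' : (v : Fin n) ∉ B := by
      have h2 : (v : Fin n) ∈ univ \ B := v.2
      exact (Finset.mem_sdiff.mp h2).2
    apply hv'
    rw [hB, mem_filter]
    refine ⟨mem_univ _, ?_⟩
    let hom : G →g G0 := ⟨Subtype.val, fun {p q} h => h⟩
    refine ⟨w.map hom, ?_, ?_⟩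
    · exact hcyc.map (f := hom) Subtype.val_injective
    · rw [SimpleGraph.Walk.length_map]
      exact hlen
  refine ⟨{x : Fin n // x ∈ s'}, inferInstance, G, hNoShort, ?_, ?_⟩
  · apply cliqueNum_le_two_of_no_triangle
    intro v w hcyc hlen3
    exact hNoShort v w hcyc (by omega)
  · by_contra hχ
    push_neg at hχ
    have hcol : G.Colorable k := SimpleGraph.chromaticNumber_le_iff_colorable.mp hχ
    obtain ⟨C⟩ := hcol
    have hfib : ∀ c : Fin k,
        (univ.filter (fun v : {x : Fin n // x ∈ s'} => C v = c)).card ≤ a - 1 := by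
      intro c
      by_contra hge
      push_neg at hge
      obtain ⟨u, hu_sub, hu_card⟩ := Finset.exists_subset_card_eq
        (show a ≤ (univ.filter (fun v : {x : Fin n // x ∈ s'} => C v = c)).card by omega)
      apply hindep (u.image Subtype.val)
        (by rw [Finset.card_image_of_injective _ Subtype.val_injective, hu_card])
      intro x hx y hy hxy
      rw [Finset.mem_image] at hx hy
      obtain ⟨x', hx', rfl⟩ := hx
      obtain ⟨y', hy', rfl⟩ := hy
      have hcx : C x' = c := (Finset.mem_filter.mp (hu_sub hx')).2
      have hcy : C y' = c := (Finset.mem_filter.mp (hu_sub hy')).2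
      have hnadj : ¬ G.Adj x' y' := fun hadj => (C.valid hadj) (hcx.trans hcy.symm)
      intro hval0
      apply hnadj
      show G0.Adj x' y'
      rw [hG0]
      exact ⟨hxy, hval0⟩
    have hsum : Fintype.card {x : Fin n // x ∈ s'}
        = ∑ c : Fin k, (univ.filter (fun v : {x : Fin n // x ∈ s'} => C v = c)).card := by
      rw [← Finset.card_univ]
      exact Finset.card_eq_sum_card_fiberwise (fun x _ => Finset.mem_univ (C x))
    have hle : Fintype.card {x : Fin n // x ∈ s'} ≤ k * (a - 1) := by
      rw [hsum]
      calc ∑ c : Fin k, (univ.filter (fun v : {x : Fin n // x ∈ s'} => C v = c)).card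
          ≤ ∑ _c : Fin k, (a - 1) := Finset.sum_le_sum (fun c _ => hfib c)
        _ = k * (a - 1) := by rw [Finset.sum_const, card_univ, Fintype.card_fin, smul_eq_mul]
    have hcardV : Fintype.card {x : Fin n // x ∈ s'} = n - B.card := by
      have h1 : Fintype.card {x : Fin n // x ∈ s'} = s'.card := Fintype.card_coe s'
      rw [h1, hs', Finset.card_sdiff_of_subset (Finset.subset_univ _), card_univ, Fintype.card_fin]
    have e1 : (k + 1) * a = k * a + a := by ring
    have e2 : k * a = k * (a - 1) + k := by
      obtain ⟨b, hb⟩ : ∃ b, a = b + 1 := ⟨a - 1, by omega⟩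
      have hb' : a - 1 = b := by omega
      rw [hb', hb]
      ring
    omega
end I
/-- If `g ≥ 3` and `H` contains a cycle of length `g`, then for every `k` there is an
`H`-free graph with clique number at most 2 and chromatic number greater than `k`;
consequently every χ-bounding graph is a forest (acyclic). -/
theorem graphs_with_cycles_not_chiBounding :
    (∀ (g : ℕ), 3 ≤ g → ∀ {W : Type} (H : SimpleGraph W),
      (∃ (w : W) (c : H.Walk w w), c.IsCycle ∧ c.length = g) →
      ∀ k : ℕ, ∃ (V : Type) (_ : Fintype V) (G : SimpleGraph V),
        ¬ Nonempty (H ↪g G) ∧ G.cliqueNum ≤ 2 ∧ (k : ℕ∞) < G.chromaticNumber) ∧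
    (∀ {W : Type} (H : SimpleGraph W), ChiBounding H → H.IsAcyclic) := by
  have part1 : ∀ (g : ℕ), 3 ≤ g → ∀ {W : Type} (H : SimpleGraph W),
      (∃ (w : W) (c : H.Walk w w), c.IsCycle ∧ c.length = g) →
      ∀ k : ℕ, ∃ (V : Type) (_ : Fintype V) (G : SimpleGraph V),
        ¬ Nonempty (H ↪g G) ∧ G.cliqueNum ≤ 2 ∧ (k : ℕ∞) < G.chromaticNumber := by
    intro g hg W H hHcyc k
    obtain ⟨V, instF, G, hfree, hclique, hchrom⟩ := main_construction g k hg
    refine ⟨V, instF, G, ?_, hclique, hchrom⟩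
    rintro ⟨emb⟩
    obtain ⟨w0, c, hcyc, hlen⟩ := hHcyc
    have hcyc' : (c.map emb.toHom).IsCycle :=
      hcyc.map (f := emb.toHom) (by exact emb.injective)
    apply hfree _ _ hcyc'
    rw [SimpleGraph.Walk.length_map, hlen]
  refine ⟨part1, ?_⟩
  intro W H hcb
  by_contra hac
  obtain ⟨v, w, hcyc⟩ : ∃ (v : W) (w : H.Walk v v), w.IsCycle := by
    by_contra h
    push_neg at h
    exact hac (fun v w => h v w)
  obtain ⟨f, hf⟩ := hcb
  set k := f 0 + f 1 + f 2 with hk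
  obtain ⟨V, instF, G, hfree, hclq, hχ⟩ :=
    part1 w.length hcyc.three_le_length H ⟨v, w, hcyc, rfl⟩ k
  letI := instF
  have hb := hf V G hfree
  have hfk : f G.cliqueNum ≤ k := by
    set q := G.cliqueNum with hq
    interval_cases q <;> omega
  exact lt_irrefl _ (lt_of_lt_of_le hχ (le_trans hb (Nat.cast_le.mpr hfk)))
end

section
/- If a graph G can be oriented acyclically such that it contains no induced directed path on four vertices oriented as →←← , then G satisfies χ(G) = ω(G) (Chvátal). -/
open SimpleGraph

/-- `r` is an orientation of `G`: every arc is an edge, and every edge gets exactly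
one direction. -/
def IsOrientation {V : Type*} (G : SimpleGraph V) (r : V → V → Prop) : Prop :=
  (∀ x y, r x y → G.Adj x y) ∧ (∀ x y, G.Adj x y → (r x y ↔ ¬ r y x))

section Greedy

variable {V : Type*} [LinearOrder V] [WellFoundedLT V] (G : SimpleGraph V)

/-- The greedily constructed stable set along the order: `v` is in the set iff no
earlier neighbor of `v` is in the set. -/
noncomputable def greedySet : V → Prop :=
  WellFounded.fix wellFounded_lt (fun v rec => ∀ u, (h : u < v) → G.Adj u v → ¬ rec u h)

lemma greedySet_iff (v : V) :
    greedySet G v ↔ ∀ u, u < v → G.Adj u v → ¬ greedySet G u := by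
  unfold greedySet
  rw [WellFounded.fix_eq]

lemma greedySet_stable {a b : V} (ha : greedySet G a) (hb : greedySet G b)
    (hab : G.Adj a b) : False := by
  rcases lt_trichotomy a b with h | h | h
  · exact (greedySet_iff G b).mp hb a h hab ha
  · exact G.loopless.irrefl b (h ▸ hab)
  · exact (greedySet_iff G a).mp ha b h hab.symm hb

lemma greedySet_cover {b : V} (hb : ¬ greedySet G b) :
    ∃ a, greedySet G a ∧ a < b ∧ G.Adj a b := by
  rw [greedySet_iff] at hb
  push_neg at hb
  obtain ⟨u, h1, h2, h3⟩ := hb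
  exact ⟨u, h3, h1, h2⟩

end Greedy

/-- Key lemma: the greedy stable set meets every (nonempty) clique avoiding it
"from above": in fact some greedy vertex is adjacent to all of the clique. -/
lemma greedy_meets_clique {V : Type*} [Fintype V] [LinearOrder V] (G : SimpleGraph V)
    (hp : ∀ a b c d : V, b ≠ d → G.Adj a b → G.Adj b c → G.Adj c d →
      ¬G.Adj a c → ¬G.Adj a d → ¬G.Adj b d → a < b → d < c → False)
    (K : Finset V) (hK : G.IsClique (K : Set V)) (hKA : ∀ b ∈ K, ¬ greedySet G b)
    (hne : K.Nonempty) :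
    ∃ a, greedySet G a ∧ ∀ b ∈ K, G.Adj a b := by
  classical
  set D : V → Finset V :=
    fun b => Finset.univ.filter (fun a => greedySet G a ∧ a < b ∧ G.Adj a b) with hD
  have hDmem : ∀ b x, x ∈ D b ↔ greedySet G x ∧ x < b ∧ G.Adj x b := by
    intro b x
    simp [hD]
  have hDne : ∀ b ∈ K, (D b).Nonempty := by
    intro b hb
    obtain ⟨a, h1, h2, h3⟩ := greedySet_cover G (hKA b hb)
    exact ⟨a, (hDmem b a).mpr ⟨h1, h2, h3⟩⟩
  set β : V → V := fun b => if h : (D b).Nonempty then (D b).min' h else b with hβ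
  have hβmem : ∀ b ∈ K, β b ∈ D b := by
    intro b hb
    simp only [hβ, dif_pos (hDne b hb)]
    exact Finset.min'_mem _ _
  have hβle : ∀ b ∈ K, ∀ x ∈ D b, β b ≤ x := by
    intro b hb x hx
    simp only [hβ, dif_pos (hDne b hb)]
    exact Finset.min'_le _ _ hx
  obtain ⟨b0, hb0K, hb0max⟩ := K.exists_max_image β hne
  obtain ⟨hga, halt, haadj⟩ := (hDmem b0 (β b0)).mp (hβmem b0 hb0K)
  refine ⟨β b0, hga, ?_⟩
  by_contra hcon
  push_neg at hcon
  obtain ⟨c, hcK, hnac⟩ := hcon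
  obtain ⟨hgd, hdlt, hdadj⟩ := (hDmem c (β c)).mp (hβmem c hcK)
  have hb0c : b0 ≠ c := fun h => hnac (h ▸ haadj)
  have hbc : G.Adj b0 c := hK (Finset.mem_coe.mpr hb0K) (Finset.mem_coe.mpr hcK) hb0c
  have had : ¬ G.Adj (β b0) (β c) := fun h => greedySet_stable G hga hgd h
  have hand : β b0 ≠ β c := fun h => hnac (h ▸ hdadj)
  have hb0d : b0 ≠ β c := fun h => (hKA b0 hb0K) (h ▸ hgd)
  have hbd : G.Adj b0 (β c) := by
    by_contra hnbd
    exact hp (β b0) b0 c (β c) hb0d haadj hbc hdadj.symm hnac had hnbd halt hdlt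
  have hdlta : β c < β b0 := lt_of_le_of_ne (hb0max c hcK) (fun h => hand h.symm)
  have : β b0 ≤ β c :=
    hβle b0 hb0K (β c) ((hDmem b0 (β c)).mpr ⟨hgd, hdlta.trans halt, hbd.symm⟩)
  exact absurd this (not_le.mpr hdlta)

/-- Main induction: a finite linearly ordered graph with no "obstruction" induced
path is `ω`-colorable. -/
lemma chvatal_colorable : ∀ (n : ℕ) (V : Type u) [Fintype V] [LinearOrder V]
    (G : SimpleGraph V),
    (∀ a b c d : V, b ≠ d → G.Adj a b → G.Adj b c → G.Adj c d →
      ¬G.Adj a c → ¬G.Adj a d → ¬G.Adj b d → a < b → d < c → False) →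
    Fintype.card V ≤ n → G.Colorable G.cliqueNum := by
  intro n
  induction n with
  | zero =>
    intro V _ _ G hp hcard
    haveI : IsEmpty V := Fintype.card_eq_zero_iff.mp (Nat.le_zero.mp hcard)
    exact Colorable.of_isEmpty (G := G) _
  | succ n ih =>
    intro V _ _ G hp hcard
    classical
    cases isEmpty_or_nonempty V with
    | inl h => exact Colorable.of_isEmpty (G := G) _
    | inr h =>
      obtain ⟨a0, -, ha0min⟩ := Finset.exists_min_image (Finset.univ : Finset V) id Finset.univ_nonempty
      have hga0 : greedySet G a0 := (greedySet_iff G a0).mpr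
        (fun u hu _ _ => absurd (ha0min u (Finset.mem_univ u)) (not_le.mpr hu))
      let V' := {v : V // ¬ greedySet G v}
      let G' : SimpleGraph V' := G.comap Subtype.val
      have hcard' : Fintype.card V' < Fintype.card V :=
        Fintype.card_subtype_lt (x := a0) (not_not.mpr hga0)
      have hp' : ∀ a b c d : V', b ≠ d → G'.Adj a b → G'.Adj b c → G'.Adj c d →
          ¬G'.Adj a c → ¬G'.Adj a d → ¬G'.Adj b d → a < b → d < c → False := by
        intro a b c d hbd h1 h2 h3 h4 h5 h6 h7 h8
        exact hp a.1 b.1 c.1 d.1 (fun hh => hbd (Subtype.ext hh)) h1 h2 h3 h4 h5 h6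
          (Subtype.coe_lt_coe.mpr h7) (Subtype.coe_lt_coe.mpr h8)
      have hc' : G'.Colorable G'.cliqueNum := ih V' G' hp' (by omega)
      have hlt : G'.cliqueNum < G.cliqueNum := by
        have h1le : 1 ≤ G.cliqueNum := by
          obtain ⟨v⟩ := h
          have hcl : G.IsClique ({v} : Finset V) := by
            simp [Finset.coe_singleton]
          have := hcl.card_le_cliqueNum
          simpa using this
        obtain ⟨s', hs'⟩ := G'.exists_isNClique_cliqueNum
        rcases s'.eq_empty_or_nonempty with rfl | hsne
        · have h0 : G'.cliqueNum = 0 := by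
            have := hs'.card_eq
            simpa using this.symm
          omega
        · set K := s'.image Subtype.val with hKdef
          have hKclique : G.IsClique (K : Set V) := by
            intro x hx y hy hxy
            obtain ⟨x', hx', rfl⟩ := Finset.mem_image.mp (Finset.mem_coe.mp hx)
            obtain ⟨y', hy', rfl⟩ := Finset.mem_image.mp (Finset.mem_coe.mp hy)
            exact hs'.isClique (Finset.mem_coe.mpr hx') (Finset.mem_coe.mpr hy')
              (fun hh => hxy (congrArg Subtype.val hh))
          have hKA : ∀ b ∈ K, ¬ greedySet G b := by
            intro b hb
            obtain ⟨x', _, rfl⟩ := Finset.mem_image.mp hb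
            exact x'.2
          have hKne : K.Nonempty := hsne.image _
          obtain ⟨a, hga, hadj⟩ := greedy_meets_clique G hp K hKclique hKA hKne
          have haK : a ∉ K := fun hh => hKA a hh hga
          have hcard_ins : (insert a K).card = G'.cliqueNum + 1 := by
            rw [Finset.card_insert_of_notMem haK,
              Finset.card_image_of_injective _ Subtype.val_injective, hs'.card_eq]
          have hclins : G.IsClique ((insert a K : Finset V) : Set V) := by
            rw [Finset.coe_insert]
            exact hKclique.insert (fun b hb _ => hadj b (Finset.mem_coe.mp hb))
          have := hclins.card_le_cliqueNum
          omega
      obtain ⟨m, hm⟩ : ∃ m, G.cliqueNum = m + 1 := ⟨G.cliqueNum - 1, by omega⟩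
      have hc'' : G'.Colorable m := hc'.mono (by omega) 
      obtain ⟨C'⟩ := hc''
      rw [hm]
      refine ⟨Coloring.mk
        (fun v => if hgv : greedySet G v then Fin.last m else (C' ⟨v, hgv⟩).castSucc) ?_⟩
      intro u v huv
      split_ifs with hu hv hv
      · exact (greedySet_stable G hu hv huv).elim
      · exact (Fin.castSucc_lt_last _).ne'
      · exact (Fin.castSucc_lt_last _).ne
      · have hadj' : G'.Adj ⟨u, hu⟩ ⟨v, hv⟩ := huv
        exact fun hh => C'.valid hadj' (Fin.castSucc_injective _ hh)

/-- Chvátal's theorem: if a finite graph `G` admits an acyclic orientation with no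
induced four-vertex path `v₁v₂v₃v₄` oriented `v₁→v₂, v₃→v₂, v₄→v₃`, then
`χ(G) = ω(G)`. -/
theorem chvatal_no_oriented_path {V : Type*} [Fintype V] (G : SimpleGraph V)
    (r : V → V → Prop) (hor : IsOrientation G r)
    (hacyclic : ∀ x, ¬ Relation.TransGen r x x)
    (hpath : ¬ ∃ v₁ v₂ v₃ v₄ : V,
      v₁ ≠ v₂ ∧ v₁ ≠ v₃ ∧ v₁ ≠ v₄ ∧ v₂ ≠ v₃ ∧ v₂ ≠ v₄ ∧ v₃ ≠ v₄ ∧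
      G.Adj v₁ v₂ ∧ G.Adj v₂ v₃ ∧ G.Adj v₃ v₄ ∧
      ¬ G.Adj v₁ v₃ ∧ ¬ G.Adj v₁ v₄ ∧ ¬ G.Adj v₂ v₄ ∧
      r v₁ v₂ ∧ r v₃ v₂ ∧ r v₄ v₃) :
    G.chromaticNumber = (G.cliqueNum : ℕ∞) := by
  classical
  haveI hpo : IsPartialOrder V (Relation.ReflTransGen r) :=
    { refl := fun a => Relation.ReflTransGen.refl
      trans := fun a b c h1 h2 => h1.trans h2
      antisymm := by
        intro a b h1 h2
        rcases Relation.reflTransGen_iff_eq_or_transGen.mp h1 with h | t1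
        · exact h.symm
        · rcases Relation.reflTransGen_iff_eq_or_transGen.mp h2 with h | t2
          · exact h
          · exact absurd (t1.trans t2) (hacyclic a) }
  obtain ⟨s, hs, hrs⟩ := extend_partialOrder (Relation.ReflTransGen r)
  letI : LinearOrder V :=
    { le := s
      le_refl := hs.toIsPartialOrder.toIsPreorder.toRefl.refl
      le_trans := fun a b c => hs.toIsPartialOrder.toIsPreorder.toIsTrans.trans a b c
      le_antisymm := fun a b => hs.toIsPartialOrder.toAntisymm.antisymm a b
      le_total := hs.toTotal.total
      toDecidableLE := Classical.decRel s }
  have hedge : ∀ x y : V, G.Adj x y → x < y → r x y := by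
    intro x y hadj hlt
    by_contra hnr
    have hr : r y x := (hor.2 y x hadj.symm).mpr hnr
    have hsy : s y x := hrs y x (Relation.ReflTransGen.single hr)
    exact hlt.not_ge hsy
  have hp : ∀ a b c d : V, b ≠ d → G.Adj a b → G.Adj b c → G.Adj c d →
      ¬G.Adj a c → ¬G.Adj a d → ¬G.Adj b d → a < b → d < c → False := by
    intro a b c d hbd hab hbc hcd hnac hnad hnbd hlab hldc
    have hrab : r a b := hedge a b hab hlab
    have hrdc : r d c := hedge d c hcd.symm hldc
    have hac : a ≠ c := fun hh => hnad (by rw [hh]; exact hcd)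
    have had : a ≠ d := fun hh => hnac (by rw [hh]; exact hcd.symm)
    by_cases hm : r b c
    · exact hpath ⟨d, c, b, a, hcd.ne', hbd.symm, had.symm, hbc.ne', hac.symm, hab.ne',
        hcd.symm, hbc.symm, hab.symm,
        (fun hh => hnbd hh.symm), (fun hh => hnad hh.symm), (fun hh => hnac hh.symm),
        hrdc, hm, hrab⟩
    · have hrcb : r c b := (hor.2 c b hbc.symm).mpr hm
      exact hpath ⟨a, b, c, d, hab.ne, hac, had, hbc.ne, hbd, hcd.ne,
        hab, hbc, hcd, hnac, hnad, hnbd, hrab, hrcb, hrdc⟩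
  have hcol : G.Colorable G.cliqueNum := chvatal_colorable (Fintype.card V) V G hp le_rfl
  refine le_antisymm hcol.chromaticNumber_le ?_
  obtain ⟨t, ht⟩ := G.exists_isNClique_cliqueNum
  have := ht.isClique.card_le_chromaticNumber
  rwa [ht.card_eq] at this
end
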